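/- arXiv:0905.1991 — 6 statements merged into one kernel-verified Lean document; each statement's English description precedes it below -/
import Mathlib

section
/- Let A be a finite set of positive real numbers. Then |A+A|^2 · |A/A| ≥ |A|^4 / 4. -/
open Finset Pointwise


private noncomputable def fib (A : Finset ℝ) (r : ℝ) : Finset (ℝ × ℝ) :=
  (A ×ˢ A).filter (fun p => p.1 / p.2 = r)

private lemma fib_spec {A : Finset ℝ} (hA : ∀ a ∈ A, 0 < a) {r : ℝ} {p : ℝ × ℝ}
    (hp : p ∈ fib A r) : p.1 ∈ A ∧ p.2 ∈ A ∧ p.1 = r * p.2 := by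
  simp only [fib, Finset.mem_filter, Finset.mem_product] at hp
  obtain ⟨⟨h1, h2⟩, h3⟩ := hp
  have h2' : p.2 ≠ 0 := ne_of_gt (hA _ h2)
  rw [div_eq_iff h2'] at h3
  exact ⟨h1, h2, h3⟩

private lemma fib_sum (A : Finset ℝ) :
    ∑ r ∈ A / A, (fib A r).card = A.card ^ 2 := by
  rw [sq, ← Finset.card_product]
  exact (Finset.card_eq_sum_card_fiberwise (fun p hp => by
    rw [Finset.mem_coe, Finset.mem_product] at hp
    exact Finset.div_mem_div hp.1 hp.2)).symm

private lemma fib_card_le (A : Finset ℝ) (hA : ∀ a ∈ A, 0 < a) (r : ℝ) :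
    (fib A r).card ≤ A.card := by
  apply Finset.card_le_card_of_injOn (fun p => p.2)
  · intro p hp
    exact (fib_spec hA (Finset.mem_coe.mp hp)).2.1
  · intro p hp q hq h
    simp only at h
    obtain ⟨_, _, hp3⟩ := fib_spec hA (Finset.mem_coe.mp hp)
    obtain ⟨_, _, hq3⟩ := fib_spec hA (Finset.mem_coe.mp hq)
    have : p.1 = q.1 := by rw [hp3, hq3, h]
    exact Prod.ext this h

private lemma one_le_fib_card {A : Finset ℝ} {r : ℝ} (h : r ∈ A / A) :
    1 ≤ (fib A r).card := by
  rw [Finset.mem_div] at h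
  obtain ⟨a, ha, b, hb, rfl⟩ := h
  refine Finset.card_pos.mpr ⟨(a, b), ?_⟩
  simp [fib, Finset.mem_filter, Finset.mem_product, ha, hb]

private lemma ratio_pos {A : Finset ℝ} (hA : ∀ a ∈ A, 0 < a) {r : ℝ} (hr : r ∈ A / A) :
    0 < r := by
  rw [Finset.mem_div] at hr
  obtain ⟨a, ha, b, hb, rfl⟩ := hr
  exact div_pos (hA a ha) (hA b hb)

private lemma card_le_sumset (A : Finset ℝ) (hne : A.Nonempty) : A.card ≤ (A + A).card := by
  obtain ⟨a, ha⟩ := hne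
  apply Finset.card_le_card_of_injOn (fun x => a + x)
  · intro x hx; exact Finset.add_mem_add ha hx
  · intro x _ y _ h; exact add_left_cancel h

private lemma key_geom (A : Finset ℝ) (hA : ∀ a ∈ A, 0 < a) (t : ℕ) :
    ((((A / A).filter (fun r => t ≤ (fib A r).card)).card : ℝ) - 1) * (t : ℝ) ^ 2
      ≤ (((A + A).card : ℝ)) ^ 2 := by
  set H := (A / A).filter (fun r => t ≤ (fib A r).card) with hH
  set c := H.card with hc
  rcases Nat.lt_or_ge c 2 with hc2 | hc2
  · have h1 : (c : ℝ) - 1 ≤ 0 := by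
      have : c ≤ 1 := by omega
      have := Nat.cast_le (α := ℝ).mpr this
      push_cast at this ⊢
      linarith
    have h2 : (0:ℝ) ≤ (t:ℝ)^2 := sq_nonneg _
    nlinarith [sq_nonneg (((A + A).card : ℝ))]
  · -- main case
    set l := H.sort (· ≤ ·) with hl
    have hlen : l.length = c := Finset.length_sort _
    have hslt : l.Pairwise (· < ·) := (Finset.sortedLT_sort H).pairwise
    set ρ : ℕ → ℝ := fun i => l.getD i 0 with hρ
    have hget : ∀ i (hi : i < c), ρ i = l.get ⟨i, by omega⟩ := by
      intro i hi
      exact List.getD_eq_get l 0 ⟨i, by omega⟩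
    have hmem : ∀ i, i < c → ρ i ∈ H := by
      intro i hi
      rw [hget i hi]
      exact (Finset.mem_sort _).mp (List.get_mem l _)
    have hlt : ∀ i j, i < j → j < c → ρ i < ρ j := by
      intro i j hij hj
      rw [hget i (by omega), hget j hj]
      exact hslt.rel_get_of_lt (by simpa using hij)
    -- facts about heavy ratios
    have hHsub : ∀ {r : ℝ}, r ∈ H → r ∈ A / A := by
      intro r hr; exact (Finset.mem_filter.mp hr).1
    have hHcard : ∀ {r : ℝ}, r ∈ H → t ≤ (fib A r).card := by
      intro r hr; exact (Finset.mem_filter.mp hr).2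
    -- the big sigma finset
    set T : Finset ((_ : ℕ) × ((ℝ × ℝ) × (ℝ × ℝ))) :=
      (Finset.range (c - 1)).sigma (fun j => fib A (ρ j) ×ˢ fib A (ρ (j + 1))) with hT
    have hTcard : T.card = ∑ j ∈ Finset.range (c - 1), (fib A (ρ j)).card * (fib A (ρ (j+1))).card := by
      rw [hT, Finset.card_sigma]
      exact Finset.sum_congr rfl (fun j _ => Finset.card_product _ _)
    -- sector facts
    have hfacts : ∀ x ∈ T, x.1 + 1 < c ∧
        x.2.1.1 ∈ A ∧ x.2.1.2 ∈ A ∧ x.2.1.1 = ρ x.1 * x.2.1.2 ∧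
        x.2.2.1 ∈ A ∧ x.2.2.2 ∈ A ∧ x.2.2.1 = ρ (x.1 + 1) * x.2.2.2 := by
      intro x hx
      rw [hT, Finset.mem_sigma, Finset.mem_product] at hx
      obtain ⟨hj, hp, hq⟩ := hx
      rw [Finset.mem_range] at hj
      have hj' : x.1 + 1 < c := by omega
      obtain ⟨a1, a2, a3⟩ := fib_spec hA hp
      obtain ⟨b1, b2, b3⟩ := fib_spec hA hq
      exact ⟨hj', a1, a2, a3, b1, b2, b3⟩
    have hsector : ∀ x ∈ T,
        ρ x.1 * (x.2.1.2 + x.2.2.2) < x.2.1.1 + x.2.2.1 ∧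
        x.2.1.1 + x.2.2.1 < ρ (x.1 + 1) * (x.2.1.2 + x.2.2.2) := by
      intro x hx
      obtain ⟨hj, a1, a2, a3, b1, b2, b3⟩ := hfacts x hx
      have hp2 : 0 < x.2.1.2 := hA _ a2
      have hq2 : 0 < x.2.2.2 := hA _ b2
      have hrlt : ρ x.1 < ρ (x.1 + 1) := hlt _ _ (by omega) hj
      constructor
      · rw [a3, b3]; nlinarith
      · rw [a3, b3]; nlinarith
    -- injectivity
    have hinj : Set.InjOn (fun x : (_ : ℕ) × ((ℝ × ℝ) × (ℝ × ℝ)) =>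
        (x.2.1.1 + x.2.2.1, x.2.1.2 + x.2.2.2)) ↑T := by
      intro x hx y hy heq
      have hx' := Finset.mem_coe.mp hx
      have hy' := Finset.mem_coe.mp hy
      simp only [Prod.mk.injEq] at heq
      obtain ⟨heq1, heq2⟩ := heq
      obtain ⟨hxj, xa1, xa2, xa3, xb1, xb2, xb3⟩ := hfacts x hx'
      obtain ⟨hyj, ya1, ya2, ya3, yb1, yb2, yb3⟩ := hfacts y hy'
      obtain ⟨hxl, hxr⟩ := hsector x hx'
      obtain ⟨hyl, hyr⟩ := hsector y hy'
      have hjj : x.1 = y.1 := by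
        by_contra hne
        rcases Nat.lt_or_ge x.1 y.1 with h | h
        · have h1 : ρ (x.1 + 1) ≤ ρ y.1 := by
            rcases Nat.lt_or_ge (x.1 + 1) y.1 with h' | h'
            · exact le_of_lt (hlt _ _ h' (by omega))
            · have : x.1 + 1 = y.1 := by omega
              rw [this]
          have hpos : (0:ℝ) < y.2.1.2 + y.2.2.2 := by
            have := hA _ ya2; have := hA _ yb2; linarith
          have hmul : ρ (x.1+1) * (y.2.1.2 + y.2.2.2) ≤ ρ y.1 * (y.2.1.2 + y.2.2.2) :=
            mul_le_mul_of_nonneg_right h1 (le_of_lt hpos)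
          rw [heq2] at hxr
          linarith
        · have h : y.1 < x.1 := by omega
          have h1 : ρ (y.1 + 1) ≤ ρ x.1 := by
            rcases Nat.lt_or_ge (y.1 + 1) x.1 with h' | h'
            · exact le_of_lt (hlt _ _ h' (by omega))
            · have : y.1 + 1 = x.1 := by omega
              rw [this]
          have hpos : (0:ℝ) < x.2.1.2 + x.2.2.2 := by
            have := hA _ xa2; have := hA _ xb2; linarith
          have hmul : ρ (y.1+1) * (x.2.1.2 + x.2.2.2) ≤ ρ x.1 * (x.2.1.2 + x.2.2.2) :=
            mul_le_mul_of_nonneg_right h1 (le_of_lt hpos)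
          rw [← heq2] at hyr
          linarith
      -- now x.1 = y.1 : solve the linear system
      rw [← hjj] at ya3 yb3
      have hrne : ρ (x.1 + 1) - ρ x.1 ≠ 0 :=
        ne_of_gt (by have := hlt x.1 (x.1+1) (by omega) hxj; linarith)
      have e1 : ρ x.1 * x.2.1.2 + ρ (x.1+1) * x.2.2.2
          = ρ x.1 * y.2.1.2 + ρ (x.1+1) * y.2.2.2 := by
        linear_combination heq1 - xa3 - xb3 + ya3 + yb3
      have h2 : (ρ (x.1+1) - ρ x.1) * x.2.2.2 = (ρ (x.1+1) - ρ x.1) * y.2.2.2 := by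
        linear_combination e1 - ρ x.1 * heq2
      have hq2eq : x.2.2.2 = y.2.2.2 := mul_left_cancel₀ hrne h2
      have hp2eq : x.2.1.2 = y.2.1.2 := by linarith
      have hq1eq : x.2.2.1 = y.2.2.1 := by rw [xb3, yb3, hq2eq]
      have hp1eq : x.2.1.1 = y.2.1.1 := by rw [xa3, ya3, hp2eq]
      exact Sigma.ext hjj (heq_of_eq (Prod.ext (Prod.ext hp1eq hp2eq) (Prod.ext hq1eq hq2eq)))
    -- upper bound on T.card
    have hupper : T.card ≤ (A + A).card * (A + A).card := by
      have h1 : T.card ≤ ((A + A) ×ˢ (A + A)).card := by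
        apply Finset.card_le_card_of_injOn _ _ hinj
        intro x hx
        obtain ⟨_, xa1, xa2, xa3, xb1, xb2, xb3⟩ := hfacts x hx
        rw [Finset.mem_coe, Finset.mem_product]
        exact ⟨Finset.add_mem_add xa1 xb1, Finset.add_mem_add xa2 xb2⟩
      rwa [Finset.card_product] at h1
    -- lower bound on T.card
    have hlower : ((c : ℝ) - 1) * (t : ℝ)^2 ≤ (T.card : ℝ) := by
      rw [hTcard]
      push_cast
      have : ∀ j ∈ Finset.range (c - 1),
          (t:ℝ)^2 ≤ ((fib A (ρ j)).card : ℝ) * ((fib A (ρ (j+1))).card : ℝ) := by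
        intro j hj
        rw [Finset.mem_range] at hj
        have h1 : t ≤ (fib A (ρ j)).card := hHcard (hmem j (by omega))
        have h2 : t ≤ (fib A (ρ (j+1))).card := hHcard (hmem (j+1) (by omega))
        have h1' : (t:ℝ) ≤ ((fib A (ρ j)).card : ℝ) := by exact_mod_cast h1
        have h2' : (t:ℝ) ≤ ((fib A (ρ (j+1))).card : ℝ) := by exact_mod_cast h2
        have ht0 : (0:ℝ) ≤ t := Nat.cast_nonneg _
        nlinarith
      have hcc : ((c - 1 : ℕ) : ℝ) = (c : ℝ) - 1 := by
        rw [Nat.cast_sub (by omega : 1 ≤ c)]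
        norm_num
      calc ((c:ℝ) - 1) * (t:ℝ)^2 = ∑ _j ∈ Finset.range (c-1), (t:ℝ)^2 := by
            rw [Finset.sum_const, Finset.card_range, nsmul_eq_mul, hcc]
        _ ≤ _ := Finset.sum_le_sum this
    have hupper' : (T.card : ℝ) ≤ ((A+A).card : ℝ)^2 := by
      rw [sq]
      exact_mod_cast hupper
    linarith


private lemma sum_getD (l : List ℕ) : ∑ i ∈ Finset.range l.length, l.getD i 0 = l.sum := by
  induction l with
  | nil => simp
  | cons a l ih =>
    rw [List.length_cons, Finset.sum_range_succ']
    simp only [List.getD_cons_succ, List.getD_cons_zero, List.sum_cons]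
    rw [ih]
    ring

private lemma telescope_sqrt (k : ℕ) (hk : 2 ≤ k) :
    ∑ j ∈ Finset.Ico 2 k, (Real.sqrt j - Real.sqrt ((j:ℝ) - 1))
      = Real.sqrt ((k:ℝ) - 1) - 1 := by
  induction k, hk using Nat.le_induction with
  | base =>
    have h1 : ((2:ℕ):ℝ) - 1 = 1 := by norm_num
    rw [Finset.Ico_self, Finset.sum_empty, h1, Real.sqrt_one]
    norm_num
  | succ k hk ih =>
    rw [Finset.sum_Ico_succ_top hk, ih]
    have h1 : ((k+1:ℕ):ℝ) - 1 = (k:ℝ) := by push_cast; ring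
    rw [h1]
    ring

theorem sum_division_estimate (A : Finset ℝ) (hA : ∀ a ∈ A, 0 < a) :
    ((A + A).card : ℝ) ^ 2 * ((A / A).card : ℝ) ≥ (A.card : ℝ) ^ 4 / 4 := by
  rcases A.eq_empty_or_nonempty with rfl | hne
  · simp
  set n := A.card with hn
  set S := (A + A).card with hS
  set k := (A / A).card with hk
  have hn1 : 1 ≤ n := Finset.card_pos.mpr hne
  have hSn : n ≤ S := card_le_sumset A hne
  have hkne : (A / A).Nonempty := hne.div hne
  have hk1 : 1 ≤ k := Finset.card_pos.mpr hkne
  rcases Nat.lt_or_ge n 2 with hn2 | hn2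
  · have hn1' : n = 1 := by omega
    have hS1 : (1:ℝ) ≤ (S:ℝ) := by
      have : 1 ≤ S := le_trans (by omega) hSn
      exact_mod_cast this
    have hk1' : (1:ℝ) ≤ (k:ℝ) := by exact_mod_cast hk1
    have hncast : (n:ℝ) = 1 := by exact_mod_cast hn1'
    rw [ge_iff_le, hncast]
    nlinarith
  -- main case
  have hkn : n ≤ k := by
    have h1 : ∑ r ∈ A / A, (fib A r).card ≤ ∑ _r ∈ A / A, n :=
      Finset.sum_le_sum (fun r _ => fib_card_le A hA r)
    rw [fib_sum, Finset.sum_const, smul_eq_mul, pow_two] at h1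
    exact Nat.le_of_mul_le_mul_right h1 (by omega)
  have hk2 : 2 ≤ k := le_trans hn2 hkn
  set M : Multiset ℕ := (A / A).val.map (fun r => (fib A r).card) with hM
  set l : List ℕ := M.sort (· ≤ ·) with hl
  have hlen : l.length = k := by
    rw [hl, Multiset.length_sort, hM, Multiset.card_map]
    rfl
  have hlsum : l.sum = n ^ 2 := by
    have h1 : (M : Multiset ℕ).sum = ∑ r ∈ A / A, (fib A r).card := rfl
    have h2 : (↑l : Multiset ℕ) = M := Multiset.sort_eq _ _
    have h3 : (↑l : Multiset ℕ).sum = l.sum := Multiset.sum_coe l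
    rw [← h3, h2, h1, fib_sum]
  have hsorted : l.Pairwise (· ≤ ·) := Multiset.pairwise_sort _ _
  set w : ℕ → ℕ := fun j => l.getD (k - 1 - j) 0 with hw
  have hF1 : ∑ j ∈ Finset.range k, w j = n ^ 2 := by
    rw [hw]
    have h0 := Finset.sum_range_reflect (fun i => l.getD i 0) k
    rw [h0, ← hlen, sum_getD, hlsum]
  have hF2 : ∀ j, j < k → 1 ≤ w j ∧ w j ≤ n := by
    intro j hj
    have h1 : k - 1 - j < l.length := by omega
    have h2 : w j ∈ l := by
      rw [hw]
      simp only
      rw [List.getD_eq_getElem l 0 h1]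
      exact List.getElem_mem _
    have h3 : w j ∈ M := by
      rw [← Multiset.mem_sort (r := (· ≤ ·))]
      exact h2
    rw [hM, Multiset.mem_map] at h3
    obtain ⟨r, hr, hrv⟩ := h3
    have hr' : r ∈ A / A := hr
    constructor
    · rw [← hrv]; exact one_le_fib_card hr'
    · rw [← hrv]; exact fib_card_le A hA r
  have hF3 : ∀ j, j < k → (j:ℝ) * (w j : ℝ)^2 ≤ (S:ℝ)^2 := by
    intro j hj
    set H := (A / A).filter (fun r => w j ≤ (fib A r).card) with hH
    have hHc : j + 1 ≤ H.card := by
      have hH1 : H.card = Multiset.countP (fun r => w j ≤ (fib A r).card) (A / A).val := by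
        rw [Multiset.countP_eq_card_filter]
        rfl
      have hH2 : Multiset.countP (fun v => w j ≤ v) M = H.card := by
        rw [hM, Multiset.countP_map, hH1, Multiset.countP_eq_card_filter]
      set p : ℕ → Bool := fun v => decide (w j ≤ v) with hp
      have hH3 : Multiset.countP (fun v => w j ≤ v) M = l.countP p := by
        conv_lhs => rw [← Multiset.sort_eq M (· ≤ ·), ← hl]
        exact Multiset.coe_countP _ _
      set i0 := k - 1 - j with hi0
      have hsplit : l.countP p = (l.take i0).countP p + (l.drop i0).countP p := by
        conv_lhs => rw [← List.take_append_drop i0 l]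
        exact List.countP_append
      have hlendrop : (l.drop i0).length = j + 1 := by
        rw [List.length_drop, hlen]; omega
      have hall : ∀ v ∈ l.drop i0, w j ≤ v := by
        intro v hv
        rw [List.mem_iff_get] at hv
        obtain ⟨o, ho⟩ := hv
        have h5 : (o:ℕ) < j + 1 := by rw [← hlendrop]; exact o.isLt
        have ho2 : i0 + (o:ℕ) < l.length := by omega
        have hvget : v = l.get ⟨i0 + o, ho2⟩ := by
          rw [← ho]; simp
        have hwget : w j = l.get ⟨i0, by omega⟩ := by
          rw [hw]
          exact List.getD_eq_get l 0 ⟨_, _⟩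
        rw [hvget, hwget]
        exact hsorted.rel_get_of_le (by simp)
      have hfull : (l.drop i0).countP p = j + 1 := by
        rw [← hlendrop]
        apply List.countP_eq_length.mpr
        intro a ha
        rw [hp]
        simpa using hall a ha
      omega
    have hkey := key_geom A hA (w j)
    rw [← hH] at hkey
    have h1 : (j:ℝ) ≤ (H.card : ℝ) - 1 := by
      have : ((j:ℕ):ℝ) + 1 ≤ (H.card : ℝ) := by exact_mod_cast hHc
      linarith
    have h2 : (0:ℝ) ≤ (w j : ℝ)^2 := sq_nonneg _
    nlinarith
  have hF4 : ∀ j, 2 ≤ j → j < k →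
      (w j : ℝ) ≤ 2*(S:ℝ)*(Real.sqrt j - Real.sqrt ((j:ℝ)-1)) := by
    intro j h2 hj
    have hrank := hF3 j hj
    set s := Real.sqrt j with hs
    set t' := Real.sqrt ((j:ℝ)-1) with ht'
    have hj1 : (1:ℝ) ≤ (j:ℝ) := by
      have : 1 ≤ j := by omega
      exact_mod_cast this
    have hs2 : s^2 = (j:ℝ) := Real.sq_sqrt (by linarith)
    have ht2 : t'^2 = (j:ℝ) - 1 := Real.sq_sqrt (by linarith)
    have hs0 : 0 ≤ s := Real.sqrt_nonneg _
    have ht0 : 0 ≤ t' := Real.sqrt_nonneg _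
    have hw0 : (0:ℝ) ≤ (w j : ℝ) := Nat.cast_nonneg _
    have hS0 : (0:ℝ) ≤ (S:ℝ) := Nat.cast_nonneg _
    have hprod : (s - t') * (s + t') = 1 := by nlinarith
    have hts : t' ≤ s := by nlinarith
    have h1 : (w j : ℝ) * s ≤ (S:ℝ) := by
      have hsq : ((w j:ℝ) * s)^2 ≤ (S:ℝ)^2 := by nlinarith [sq_nonneg (w j:ℝ)]
      have h6 := Real.sqrt_le_sqrt hsq
      rwa [Real.sqrt_sq (by positivity), Real.sqrt_sq hS0] at h6
    calc (w j : ℝ) = (w j : ℝ) * ((s - t') * (s + t')) := by rw [hprod]; ring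
      _ ≤ (w j : ℝ) * ((s - t') * (2*s)) := by
          apply mul_le_mul_of_nonneg_left _ hw0
          apply mul_le_mul_of_nonneg_left _ (by linarith)
          linarith
      _ = 2*(s - t')*((w j:ℝ)*s) := by ring
      _ ≤ 2*(s - t')*(S:ℝ) := mul_le_mul_of_nonneg_left h1 (by linarith)
      _ = 2*(S:ℝ)*(s - t') := by ring
  -- final assembly
  have hsplit2 : ∑ j ∈ Finset.range k, (w j:ℝ)
      = (w 0:ℝ) + (w 1:ℝ) + ∑ j ∈ Finset.Ico 2 k, (w j:ℝ) := by
    rw [Finset.range_eq_Ico,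
       ← Finset.sum_Ico_consecutive (fun j => (w j : ℝ)) (by omega : 0 ≤ 2) hk2]
    congr 1
    rw [← Finset.range_eq_Ico, Finset.sum_range_succ, Finset.sum_range_one]
  have hF1' : ∑ j ∈ Finset.range k, (w j:ℝ) = ((n:ℝ))^2 := by
    rw [← Nat.cast_sum, hF1]
    push_cast
    ring
  have hw0n : (w 0 : ℝ) ≤ (n:ℝ) := by exact_mod_cast (hF2 0 (by omega)).2
  have hw1n : (w 1 : ℝ) ≤ (n:ℝ) := by exact_mod_cast (hF2 1 (by omega)).2
  have htail : ∑ j ∈ Finset.Ico 2 k, (w j:ℝ)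
      ≤ 2*(S:ℝ)*(Real.sqrt ((k:ℝ)-1) - 1) := by
    calc ∑ j ∈ Finset.Ico 2 k, (w j:ℝ)
        ≤ ∑ j ∈ Finset.Ico 2 k, 2*(S:ℝ)*(Real.sqrt j - Real.sqrt ((j:ℝ)-1)) := by
          apply Finset.sum_le_sum
          intro j hj
          rw [Finset.mem_Ico] at hj
          exact hF4 j hj.1 hj.2
      _ = 2*(S:ℝ)*(Real.sqrt ((k:ℝ)-1) - 1) := by
          rw [← Finset.mul_sum, telescope_sqrt k hk2]
  have hSn' : (n:ℝ) ≤ (S:ℝ) := by exact_mod_cast hSn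
  have hmain : ((n:ℝ))^2 ≤ 2*(S:ℝ)*Real.sqrt ((k:ℝ)-1) := by
    have e1 : ((n:ℝ))^2 = (w 0:ℝ) + (w 1:ℝ) + ∑ j ∈ Finset.Ico 2 k, (w j:ℝ) := by
      rw [← hF1', hsplit2]
    rw [e1]
    linarith [htail, hw0n, hw1n, hSn']
  have hk1R : (0:ℝ) ≤ (k:ℝ) - 1 := by
    have : (1:ℝ) ≤ (k:ℝ) := by exact_mod_cast hk1
    linarith
  have hks : (Real.sqrt ((k:ℝ)-1))^2 = (k:ℝ)-1 := Real.sq_sqrt hk1R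
  have hS0 : (0:ℝ) ≤ (S:ℝ) := Nat.cast_nonneg _
  have hn20 : (0:ℝ) ≤ ((n:ℝ))^2 := sq_nonneg _
  have hsq := mul_self_le_mul_self hn20 hmain
  have h4 : ((n:ℝ))^4 ≤ 4*(S:ℝ)^2*((k:ℝ)-1) := by
    calc ((n:ℝ))^4 = ((n:ℝ))^2*((n:ℝ))^2 := by ring
      _ ≤ (2*(S:ℝ)*Real.sqrt ((k:ℝ)-1))*(2*(S:ℝ)*Real.sqrt ((k:ℝ)-1)) := hsq
      _ = 4*(S:ℝ)^2*(Real.sqrt ((k:ℝ)-1))^2 := by ring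
      _ = 4*(S:ℝ)^2*((k:ℝ)-1) := by rw [hks]
  have h5 : (S:ℝ)^2*((k:ℝ)-1) ≤ (S:ℝ)^2*(k:ℝ) :=
    mul_le_mul_of_nonneg_left (by linarith) (sq_nonneg (S:ℝ))
  rw [ge_iff_le]
  linarith
end

section
/- Let A be a finite set of positive real numbers. Then max{|A+A|, |A/A|} ≥ |A|^{4/3} / 2. -/
open Finset Pointwise

private noncomputable def Fray (A : Finset ℝ) (r : ℝ) : Finset (ℝ × ℝ) :=
  (A ×ˢ A).filter (fun p => p.1 / p.2 = r)

private lemma mem_Fray {A : Finset ℝ} (hA : ∀ a ∈ A, 0 < a) {r : ℝ} {p : ℝ × ℝ}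
    (hp : p ∈ Fray A r) : p.1 ∈ A ∧ p.2 ∈ A ∧ 0 < p.2 ∧ p.1 = r * p.2 := by
  simp only [Fray, mem_filter, mem_product] at hp
  obtain ⟨⟨h1, h2⟩, h3⟩ := hp
  have h2pos := hA _ h2
  exact ⟨h1, h2, h2pos, by rw [← h3, div_mul_cancel₀ _ (ne_of_gt h2pos)]⟩

private lemma sum_Fray_card (A : Finset ℝ) : ∑ r ∈ A / A, (Fray A r).card = A.card ^ 2 := by
  rw [sq, ← Finset.card_product]
  exact (Finset.card_eq_sum_card_fiberwise (f := fun p : ℝ × ℝ => p.1 / p.2)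
    (t := A / A) (fun p hp => by
      rw [Finset.mem_coe, Finset.mem_product] at hp
      exact Finset.div_mem_div hp.1 hp.2)).symm

private lemma Fray_card_le {A : Finset ℝ} (hA : ∀ a ∈ A, 0 < a) (r : ℝ) :
    (Fray A r).card ≤ A.card := by
  apply Finset.card_le_card_of_injOn (fun p => p.2) (fun p hp => (mem_Fray hA hp).2.1)
  intro p hp q hq h
  have hp' := mem_Fray hA (Finset.mem_coe.mp hp)
  have hq' := mem_Fray hA (Finset.mem_coe.mp hq)
  have h2 : p.2 = q.2 := h
  have h1 : p.1 = q.1 := by rw [hp'.2.2.2, hq'.2.2.2, h2]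
  exact Prod.ext h1 h2
private noncomputable def CC (A : Finset ℝ) (r1 r2 : ℝ) : Finset (ℝ × ℝ) :=
  ((Fray A r1) ×ˢ (Fray A r2)).image (fun pq => pq.1 + pq.2)

private lemma CC_subset {A : Finset ℝ} (hA : ∀ a ∈ A, 0 < a) (r1 r2 : ℝ) :
    CC A r1 r2 ⊆ (A + A) ×ˢ (A + A) := by
  intro z hz
  simp only [CC, mem_image] at hz
  obtain ⟨pq, hpq, rfl⟩ := hz
  rw [Finset.mem_product] at hpq
  have h1 := mem_Fray hA hpq.1
  have h2 := mem_Fray hA hpq.2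
  simp only [Finset.mem_product, Prod.fst_add, Prod.snd_add]
  exact ⟨Finset.add_mem_add h1.1 h2.1, Finset.add_mem_add h1.2.1 h2.2.1⟩

private lemma CC_card {A : Finset ℝ} (hA : ∀ a ∈ A, 0 < a) {r1 r2 : ℝ} (h12 : r1 ≠ r2) :
    (CC A r1 r2).card = (Fray A r1).card * (Fray A r2).card := by
  rw [CC, Finset.card_image_of_injOn, Finset.card_product]
  rintro ⟨⟨p1, p2⟩, ⟨q1, q2⟩⟩ hpq ⟨⟨p1', p2'⟩, ⟨q1', q2'⟩⟩ hpq' heq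
  rw [Finset.mem_coe, Finset.mem_product] at hpq hpq'
  have hp := mem_Fray hA hpq.1
  have hq := mem_Fray hA hpq.2
  have hp' := mem_Fray hA hpq'.1
  have hq' := mem_Fray hA hpq'.2
  simp only [Prod.mk_add_mk, Prod.mk.injEq] at heq hp hq hp' hq' ⊢
  obtain ⟨e1, e2⟩ := heq
  rw [hp.2.2.2, hq.2.2.2, hp'.2.2.2, hq'.2.2.2] at e1
  have hkey : (r1 - r2) * (p2 - p2') = 0 := by linear_combination e1 - r2 * e2
  have hpp : p2 = p2' := by
    rcases mul_eq_zero.mp hkey with h | h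
    · exact absurd (sub_eq_zero.mp h) h12
    · linarith [sub_eq_zero.mp h]
  have hqq : q2 = q2' := by linarith
  refine ⟨⟨?_, hpp⟩, ?_, hqq⟩
  · rw [hp.2.2.2, hp'.2.2.2, hpp]
  · rw [hq.2.2.2, hq'.2.2.2, hqq]

private lemma CC_ratio {A : Finset ℝ} (hA : ∀ a ∈ A, 0 < a) {r1 r2 : ℝ} (h12 : r1 < r2)
    {z : ℝ × ℝ} (hz : z ∈ CC A r1 r2) : r1 < z.1 / z.2 ∧ z.1 / z.2 < r2 := by
  simp only [CC, mem_image] at hz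
  obtain ⟨pq, hpq, rfl⟩ := hz
  rw [Finset.mem_product] at hpq
  have hp := mem_Fray hA hpq.1
  have hq := mem_Fray hA hpq.2
  obtain ⟨p, q⟩ := pq
  simp only [Prod.fst_add, Prod.snd_add]
  have hz2 : 0 < p.2 + q.2 := by linarith [hp.2.2.1, hq.2.2.1]
  constructor
  · rw [lt_div_iff₀ hz2, hp.2.2.2, hq.2.2.2]
    nlinarith [hq.2.2.1]
  · rw [div_lt_iff₀ hz2, hp.2.2.2, hq.2.2.2]
    nlinarith [hp.2.2.1]
set_option maxHeartbeats 1600000 in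
theorem sum_division_max (A : Finset ℝ) (hA : ∀ a ∈ A, 0 < a) :
    (max ((A + A).card) ((A / A).card) : ℝ) ≥ (A.card : ℝ) ^ ((4 : ℝ) / 3) / 2 := by
  rcases Nat.eq_zero_or_pos A.card with h0 | hpos
  · rw [h0]
    push_cast
    rw [Real.zero_rpow (by norm_num)]
    rw [ge_iff_le, show (0:ℝ)/2 = 0 by norm_num]
    exact le_trans (Nat.cast_nonneg _) (le_max_left _ _)
  by_cases hsmall : A.card ≤ 8
  · -- small case : |A+A| ≥ |A| ≥ |A|^{4/3}/2
    have hs : (A.card : ℝ) ≤ ((A + A).card : ℝ) := by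
      exact_mod_cast Finset.card_le_card_of_injOn (fun a => a + a)
        (fun a ha => Finset.add_mem_add ha ha)
        (fun a _ b _ h => by dsimp at h; linarith)
    have hx : (1:ℝ) ≤ (A.card:ℝ) := by exact_mod_cast hpos
    have hx8 : (A.card:ℝ) ≤ 8 := by exact_mod_cast hsmall
    have h13 : ((A.card:ℝ)) ^ ((1:ℝ)/3) ≤ 2 := by
      have h1 : ((A.card:ℝ)) ^ ((1:ℝ)/3) ≤ (8:ℝ) ^ ((1:ℝ)/3) :=
        Real.rpow_le_rpow (by linarith) hx8 (by norm_num)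
      have h8 : (8:ℝ) ^ ((1:ℝ)/3) = 2 := by
        rw [show (8:ℝ) = 2 ^ (3:ℕ) by norm_num, ← Real.rpow_natCast 2 3,
          ← Real.rpow_mul (by norm_num)]
        norm_num
      linarith [h8 ▸ h1]
    have hsplit : ((A.card:ℝ)) ^ ((4:ℝ)/3) = (A.card:ℝ) * ((A.card:ℝ)) ^ ((1:ℝ)/3) := by
      rw [show (4:ℝ)/3 = 1 + 1/3 by norm_num, Real.rpow_add (by linarith), Real.rpow_one]
    rw [ge_iff_le]
    refine le_trans ?_ (le_trans hs (le_max_left _ _))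
    rw [hsplit]
    nlinarith [Real.rpow_nonneg (show (0:ℝ) ≤ (A.card:ℝ) by linarith) ((1:ℝ)/3)]
  · push_neg at hsmall
    set n := A.card with hndef
    have hn9 : (9:ℝ) ≤ (n:ℝ) := by exact_mod_cast hsmall
    have hx0 : (0:ℝ) < (n:ℝ) := by linarith
    rw [ge_iff_le]
    rcases le_or_gt ((n:ℝ)^((4:ℝ)/3)/2) (((A/A).card : ℝ)) with hk | hk
    · exact le_trans hk (le_max_right _ _)
    refine le_trans ?_ (le_max_left _ _)
    -- notation
    set T : ℕ := ⌈(n:ℝ) ^ ((2:ℝ)/3)⌉₊ with hTdef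
    set H : Finset ℝ := (A / A).filter (fun r => T ≤ (Fray A r).card) with hHdef
    have hT23 : (n:ℝ) ^ ((2:ℝ)/3) ≤ (T:ℝ) := Nat.le_ceil _
    have hTpos : 0 < (n:ℝ) ^ ((2:ℝ)/3) := Real.rpow_pos_of_pos hx0 _
    have hT1 : 1 ≤ T := Nat.ceil_pos.mpr hTpos
    have hTlt : ((T:ℝ)) - 1 < (n:ℝ) ^ ((2:ℝ)/3) := by
      have := Nat.ceil_lt_add_one (le_of_lt hTpos)
      rw [← hTdef] at this
      linarith
    -- heavy mass bound
    have hsplitsum : (∑ r ∈ H, (Fray A r).card) +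
        (∑ r ∈ (A/A).filter (fun r => ¬ T ≤ (Fray A r).card), (Fray A r).card) = n ^ 2 := by
      rw [hHdef, Finset.sum_filter_add_sum_filter_not]
      exact sum_Fray_card A
    have hlight : (∑ r ∈ (A/A).filter (fun r => ¬ T ≤ (Fray A r).card), (Fray A r).card)
        ≤ (A/A).card * (T - 1) := by
      calc (∑ r ∈ (A/A).filter (fun r => ¬ T ≤ (Fray A r).card), (Fray A r).card)
          ≤ ∑ _r ∈ (A/A).filter (fun r => ¬ T ≤ (Fray A r).card), (T - 1) :=
            Finset.sum_le_sum (fun r hr => by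
              rw [Finset.mem_filter] at hr; omega)
        _ = ((A/A).filter (fun r => ¬ T ≤ (Fray A r).card)).card * (T - 1) := by
            rw [Finset.sum_const, smul_eq_mul]
        _ ≤ (A/A).card * (T - 1) := Nat.mul_le_mul_right _ (Finset.card_filter_le _ _)
    have hprod43 : (n:ℝ)^((4:ℝ)/3) * (n:ℝ)^((2:ℝ)/3) = (n:ℝ)^2 := by
      rw [← Real.rpow_add hx0, ← Real.rpow_natCast (n:ℝ) 2]
      norm_num
    have hSH : ((n:ℝ))^2 / 2 < ((∑ r ∈ H, (Fray A r).card : ℕ) : ℝ) := by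
      have hc1 : ((∑ r ∈ H, (Fray A r).card : ℕ) : ℝ)
          + ((∑ r ∈ (A/A).filter (fun r => ¬ T ≤ (Fray A r).card), (Fray A r).card : ℕ) : ℝ)
          = (n:ℝ)^2 := by exact_mod_cast congrArg (Nat.cast (R := ℝ)) hsplitsum
      have hc2 : ((∑ r ∈ (A/A).filter (fun r => ¬ T ≤ (Fray A r).card), (Fray A r).card : ℕ) : ℝ)
          ≤ ((A/A).card : ℝ) * ((T:ℝ) - 1) := by
        have := (Nat.cast_le (α := ℝ)).mpr hlight
        rw [Nat.cast_mul, Nat.cast_sub hT1] at this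
        exact_mod_cast this
      have hc3 : ((A/A).card : ℝ) * ((T:ℝ) - 1) < ((n:ℝ)^((4:ℝ)/3)/2) * ((n:ℝ)^((2:ℝ)/3)) :=
        mul_lt_mul'' hk hTlt (Nat.cast_nonneg _) (by simp only [sub_nonneg]; exact_mod_cast hT1)
      have hc4 : ((n:ℝ)^((4:ℝ)/3)/2) * ((n:ℝ)^((2:ℝ)/3)) = (n:ℝ)^2/2 := by
        rw [div_mul_eq_mul_div, hprod43]
      linarith
    -- enumeration of heavy rays in increasing order
    set m := H.card with hmdef
    have hEnum : ∃ h : ℕ → ℝ, (∀ t, t < m → h t ∈ H) ∧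
        (∀ t t', t < t' → t' < m → h t < h t') ∧
        (∀ r ∈ H, ∃ t, t < m ∧ h t = r) := by
      refine ⟨fun t => if ht : t < m then H.orderEmbOfFin hmdef.symm ⟨t, ht⟩ else 0, ?_, ?_, ?_⟩
      · intro t ht
        simp only [dif_pos ht]
        exact Finset.orderEmbOfFin_mem _ _ _
      · intro t t' htt' ht'
        simp only [dif_pos (htt'.trans ht'), dif_pos ht']
        exact (H.orderEmbOfFin hmdef.symm).strictMono (Fin.mk_lt_mk.mpr htt')
      · intro r hr
        have hrange := Finset.range_orderEmbOfFin H hmdef.symm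
        have hr' : r ∈ Set.range (H.orderEmbOfFin hmdef.symm) := by
          rw [hrange]; exact hr
        obtain ⟨i, hi⟩ := hr'
        exact ⟨i, i.isLt, by simp only [dif_pos i.isLt, Fin.eta]; exact hi⟩
    obtain ⟨h, hhmem, hhmono, hhsurj⟩ := hEnum
    have hheavy : ∀ t, t < m → T ≤ (Fray A (h t)).card := by
      intro t ht
      have := hhmem t ht
      rw [hHdef, Finset.mem_filter] at this
      exact this.2
    have hne : ∀ t, t + 1 < m → h t < h (t+1) := fun t ht =>
      hhmono t (t+1) (Nat.lt_succ_self t) ht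
    -- disjointness of the sector sum sets
    have hdisj : ∀ t1 ∈ Finset.range (m-1), ∀ t2 ∈ Finset.range (m-1), t1 ≠ t2 →
        Disjoint (CC A (h t1) (h (t1+1))) (CC A (h t2) (h (t2+1))) := by
      have key : ∀ t1 t2, t1 < t2 → t2 < m - 1 →
          Disjoint (CC A (h t1) (h (t1+1))) (CC A (h t2) (h (t2+1))) := by
        intro t1 t2 h12 ht2
        rw [Finset.disjoint_left]
        intro z hz1 hz2
        have hm1 : t1 + 1 < m := by omega
        have hm2 : t2 + 1 < m := by omega
        have r1 := CC_ratio hA (hne t1 hm1) hz1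
        have r2 := CC_ratio hA (hne t2 hm2) hz2
        have hle : h (t1+1) ≤ h t2 := by
          rcases eq_or_lt_of_le (show t1+1 ≤ t2 by omega) with he | hl
          · rw [he]
          · exact le_of_lt (hhmono _ _ hl (by omega))
        linarith [r1.2, r2.1]
      intro t1 h1 t2 h2 hne12
      rw [Finset.mem_range] at h1 h2
      rcases lt_or_gt_of_ne hne12 with hl | hl
      · exact key t1 t2 hl h2
      · exact (key t2 t1 hl h1).symm
    -- counting : disjoint sectors inside (A+A) × (A+A)
    have hcount : ∑ t ∈ Finset.range (m-1), (Fray A (h t)).card * (Fray A (h (t+1))).card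
        ≤ (A+A).card * (A+A).card := by
      calc ∑ t ∈ Finset.range (m-1), (Fray A (h t)).card * (Fray A (h (t+1))).card
          = ∑ t ∈ Finset.range (m-1), (CC A (h t) (h (t+1))).card := by
            refine Finset.sum_congr rfl fun t ht => ?_
            rw [Finset.mem_range] at ht
            exact (CC_card hA (ne_of_lt (hne t (by omega)))).symm
        _ = ((Finset.range (m-1)).biUnion (fun t => CC A (h t) (h (t+1)))).card :=
            (Finset.card_biUnion hdisj).symm
        _ ≤ ((A+A) ×ˢ (A+A)).card := Finset.card_le_card (Finset.biUnion_subset.mpr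
            (fun t _ => CC_subset hA _ _))
        _ = (A+A).card * (A+A).card := Finset.card_product _ _
    -- m ≥ 1
    have hm1 : 1 ≤ m := by
      by_contra hm0
      have hmz : H = ∅ := Finset.card_eq_zero.mp (by omega)
      rw [hmz] at hSH
      simp only [Finset.sum_empty, Nat.cast_zero] at hSH
      nlinarith
    -- reindex the heavy sum
    have hsum0 : ∑ t ∈ Finset.range m, (Fray A (h t)).card = ∑ r ∈ H, (Fray A r).card := by
      refine Finset.sum_bij (fun t ht => h t)
        (fun t ht => hhmem t (Finset.mem_range.mp ht)) ?_ ?_ ?_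
      · intro t1 h1 t2 h2 heq
        rw [Finset.mem_range] at h1 h2
        by_contra hne'
        rcases lt_or_gt_of_ne hne' with hl | hl
        · exact absurd heq (ne_of_lt (hhmono _ _ hl h2))
        · exact absurd heq.symm (ne_of_lt (hhmono _ _ hl h1))
      · intro r hr
        obtain ⟨t, ht, hteq⟩ := hhsurj r hr
        exact ⟨t, Finset.mem_range.mpr ht, hteq⟩
      · intros; rfl
    have hdecomp : ∑ t ∈ Finset.range (m-1), (Fray A (h (t+1))).card
        = (∑ r ∈ H, (Fray A r).card) - (Fray A (h 0)).card := by
      have hsr := Finset.sum_range_succ' (fun t => (Fray A (h t)).card) (m-1)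
      rw [show m - 1 + 1 = m by omega] at hsr
      omega
    -- lower bound on the sector sum
    have hlow : T * ((∑ r ∈ H, (Fray A r).card) - (Fray A (h 0)).card)
        ≤ ∑ t ∈ Finset.range (m-1), (Fray A (h t)).card * (Fray A (h (t+1))).card := by
      calc T * ((∑ r ∈ H, (Fray A r).card) - (Fray A (h 0)).card)
          = ∑ t ∈ Finset.range (m-1), T * (Fray A (h (t+1))).card := by
            rw [← Finset.mul_sum, hdecomp]
        _ ≤ ∑ t ∈ Finset.range (m-1), (Fray A (h t)).card * (Fray A (h (t+1))).card := by
            refine Finset.sum_le_sum fun t ht => ?_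
            rw [Finset.mem_range] at ht
            exact Nat.mul_le_mul_right _ (hheavy t (by omega))
    -- cast to the reals and finish
    have hg0n : (Fray A (h 0)).card ≤ n := Fray_card_le hA _
    have hg0SH : (Fray A (h 0)).card ≤ ∑ r ∈ H, (Fray A r).card :=
      Finset.single_le_sum (f := fun r => (Fray A r).card) (fun _ _ => Nat.zero_le _)
        (hhmem 0 (by omega))
    have hmain : (T:ℝ) * (((∑ r ∈ H, (Fray A r).card : ℕ) : ℝ) - ((Fray A (h 0)).card : ℝ))
        ≤ ((A+A).card : ℝ) * ((A+A).card : ℝ) := by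
      have hnat := le_trans hlow hcount
      have := (Nat.cast_le (α := ℝ)).mpr hnat
      rw [Nat.cast_mul, Nat.cast_mul, Nat.cast_sub hg0SH] at this
      exact this
    set x := (n:ℝ) with hxdef
    set y := x ^ ((2:ℝ)/3) with hydef
    set z := x ^ ((4:ℝ)/3) with hzdef
    have hzz : z * z = y * x^2 := by
      rw [hzdef, hydef, ← Real.rpow_natCast x 2, ← Real.rpow_add hx0, ← Real.rpow_add hx0]
      norm_num
    set SHr := ((∑ r ∈ H, (Fray A r).card : ℕ) : ℝ) with hSHdef
    set s := ((A+A).card : ℝ) with hsdef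
    have hs0 : (0:ℝ) ≤ s := Nat.cast_nonneg _
    have hg0x : ((Fray A (h 0)).card : ℝ) ≤ x := by rw [hxdef]; exact_mod_cast hg0n
    have hy0 : (0:ℝ) ≤ y := le_of_lt hTpos
    have hstep : y * (x^2/2 - x) ≤ s * s := by
      have h1 : x^2/2 - x ≤ SHr - ((Fray A (h 0)).card : ℝ) := by
        rw [hSHdef]; linarith [hSH]
      have h2 : (0:ℝ) ≤ x^2/2 - x := by nlinarith
      calc y * (x^2/2 - x) ≤ (T:ℝ) * (SHr - ((Fray A (h 0)).card : ℝ)) :=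
            mul_le_mul hT23 h1 h2 (Nat.cast_nonneg _)
        _ ≤ s * s := hmain
    by_contra hcon
    push_neg at hcon
    have hss : s * s < (z/2) * (z/2) := mul_self_lt_mul_self hs0 hcon
    nlinarith [mul_nonneg hy0 (show (0:ℝ) ≤ x^2/4 - x by nlinarith)]
end

section
/- Let A be a finite set of positive real numbers. Then max{ |{a^2 + b^2 : a,b ∈ A}|, |{a/b : a,b ∈ A}| } ≥ |A|^{4/3} / 2. (Equivalently: the radius-set and the angle-set of the Cartesian product A×A ⊂ ℝ² cannot both be small, since the radius-set of A×A has the same cardinality as {a^2+b^2 : a,b ∈ A} and the angle-set has the same cardinality as A/A.) -/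
open Finset Pointwise

private lemma cube_u (x : ℝ) (hx : 0 ≤ x) :
    (x ^ ((1:ℝ)/3)) ^ (3:ℕ) = x := by
  rw [← Real.rpow_natCast (x ^ ((1:ℝ)/3)) 3, ← Real.rpow_mul hx]
  norm_num

private lemma fourth_u (x : ℝ) (hx : 0 ≤ x) :
    (x ^ ((1:ℝ)/3)) ^ (4:ℕ) = x ^ ((4:ℝ)/3) := by
  rw [← Real.rpow_natCast (x ^ ((1:ℝ)/3)) 4, ← Real.rpow_mul hx]
  norm_num

private lemma arith_big (x : ℝ) (hx : 9 ≤ x) :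
    x + x ^ ((4:ℝ)/3) / 2 + x^2 / Real.sqrt 2 ≤ x^2 := by
  have hx0 : (0:ℝ) ≤ x := by linarith
  set u := x ^ ((1:ℝ)/3) with hu
  have hu0 : 0 ≤ u := Real.rpow_nonneg hx0 _
  have hu3 : u ^ (3:ℕ) = x := cube_u x hx0
  have hu4 : u ^ (4:ℕ) = x ^ ((4:ℝ)/3) := fourth_u x hx0
  have hu2 : 2 ≤ u := by
    by_contra h
    push_neg at h
    have : u ^ (3:ℕ) < 2 ^ (3:ℕ) := by
      apply pow_lt_pow_left₀ h hu0
      norm_num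
    rw [hu3] at this
    norm_num at this
    linarith
  have hs0 : (0:ℝ) < Real.sqrt 2 := Real.sqrt_pos.mpr (by norm_num)
  have hs2 : (Real.sqrt 2)^2 = 2 := Real.sq_sqrt (by norm_num)
  have hs15 : Real.sqrt 2 ≤ 3/2 := by
    nlinarith [hs0, hs2]
  set s := Real.sqrt 2 with hsdef
  -- goal in terms of u: u^3 + u^4/2 + (u^3)^2/s ≤ (u^3)^2
  rw [← hu4, ← hu3]
  have key : 2 * u^3 + u^4 + s * u^6 ≤ 2 * u^6 := by
    nlinarith [mul_nonneg (mul_nonneg hu0 hu0) hu0, sq_nonneg u,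
      mul_nonneg (sub_nonneg.mpr hu2) (sq_nonneg (u^2 + 2*u + 2)),
      mul_le_mul_of_nonneg_right hs15 (pow_nonneg hu0 6)]
  have h6 : (u^(3:ℕ))^2 = u^6 := by ring
  rw [h6]
  have hinv : u^6 / s = u^6 * s / 2 := by
    rw [div_eq_div_iff (ne_of_gt hs0) (by norm_num : (2:ℝ) ≠ 0)]
    linear_combination (-(u^6)) * hs2
  rw [hinv]
  nlinarith [key]

private lemma arith_small (x : ℝ) (h0 : 0 ≤ x) (h8 : x ≤ 8) : x ^ ((4:ℝ)/3) / 2 ≤ x := by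
  rcases eq_or_lt_of_le h0 with h | hpos
  · rw [← h]
    rw [Real.zero_rpow (by norm_num)]
    norm_num
  · have h13 : x ^ ((1:ℝ)/3) ≤ 2 := by
      have : x ^ ((1:ℝ)/3) ≤ (8:ℝ) ^ ((1:ℝ)/3) := by
        apply Real.rpow_le_rpow h0 h8
        norm_num
    -- (8:ℝ)^(1/3) = 2
      have h8e : (8:ℝ) ^ ((1:ℝ)/3) = 2 := by
        rw [show (8:ℝ) = 2 ^ (3:ℕ) by norm_num, ← Real.rpow_natCast 2 3,
          ← Real.rpow_mul (by norm_num : (0:ℝ) ≤ 2)]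
        norm_num
      linarith [this, h8e.le, h8e.ge]
    have hsplit : x ^ ((4:ℝ)/3) = x * x ^ ((1:ℝ)/3) := by
      rw [show (4:ℝ)/3 = 1 + (1:ℝ)/3 by norm_num, Real.rpow_add hpos, Real.rpow_one]
    rw [hsplit]
    nlinarith [Real.rpow_nonneg h0 ((1:ℝ)/3)]

private lemma sector_core (G RR : Finset (ℝ × ℝ))
    (hGpos : ∀ p ∈ G, 0 < p.1 ∧ 0 < p.2)
    (hsum : ∀ p ∈ G, ∀ q ∈ G, p + q ∈ RR)
    (τ : ℕ) (T : Finset ℝ)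
    (hT : ∀ σ ∈ T, τ ≤ (G.filter (fun p => p.2 / p.1 = σ)).card) :
    ((T.card : ℝ) - 1) * (τ : ℝ) ^ 2 ≤ (RR.card : ℝ) := by
  rcases le_or_gt T.card 1 with h1 | h1
  · have hc : (T.card : ℝ) ≤ 1 := by exact_mod_cast h1
    nlinarith [sq_nonneg (τ : ℝ), (Nat.cast_nonneg RR.card : (0:ℝ) ≤ RR.card)]
  · have hne : T.Nonempty := card_pos.mp (by omega)
    set fib : ℝ → Finset (ℝ × ℝ) := fun σ => G.filter (fun p => p.2 / p.1 = σ) with hfib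
    set Mx := T.max' hne with hMx
    set E := T.erase Mx with hEdef
    have hEcard : E.card = T.card - 1 := card_erase_of_mem (T.max'_mem hne)
    -- successor function
    have hUne : ∀ σ ∈ E, (T.filter (fun t => σ < t)).Nonempty := by
      intro σ hσ
      refine ⟨Mx, mem_filter.mpr ⟨T.max'_mem hne, ?_⟩⟩
      exact lt_of_le_of_ne (T.le_max' σ (mem_of_mem_erase hσ)) (ne_of_mem_erase hσ)
    -- define nxt via min'
    have key : ∀ σ ∈ E, ∃ ν, ν ∈ T ∧ σ < ν ∧ (∀ t ∈ T, σ < t → ν ≤ t) := by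
      intro σ hσ
      refine ⟨(T.filter (fun t => σ < t)).min' (hUne σ hσ), ?_, ?_, ?_⟩
      · exact (mem_filter.mp ((T.filter (fun t => σ < t)).min'_mem (hUne σ hσ))).1
      · exact (mem_filter.mp ((T.filter (fun t => σ < t)).min'_mem (hUne σ hσ))).2
      · intro t ht hlt
        exact Finset.min'_le _ t (mem_filter.mpr ⟨ht, hlt⟩)
    choose! nxt hnxtT hnxtlt hnxtmin using key
    -- basic fiber facts
    have hfibG : ∀ σ, fib σ ⊆ G := fun σ => filter_subset _ _
    have hfibprop : ∀ σ, ∀ p ∈ fib σ, p.2 = σ * p.1 ∧ 0 < p.1 := by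
      intro σ p hp
      have hpG : p ∈ G := hfibG σ hp
      have h1 : 0 < p.1 := (hGpos p hpG).1
      have h2 : p.2 / p.1 = σ := (mem_filter.mp hp).2
      exact ⟨by field_simp at h2; linarith [h2], h1⟩
    -- the sum sets
    set F : ℝ → Finset (ℝ × ℝ) :=
      fun σ => ((fib σ) ×ˢ (fib (nxt σ))).image (fun pq => pq.1 + pq.2) with hFdef
    have hFsub : ∀ σ ∈ E, F σ ⊆ RR := by
      intro σ hσ z hz
      obtain ⟨pq, hpq, rfl⟩ := mem_image.mp hz
      obtain ⟨hp, hq⟩ := mem_product.mp hpq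
      exact hsum _ (hfibG _ hp) _ (hfibG _ hq)
    have hFcard : ∀ σ ∈ E, (F σ).card = (fib σ).card * (fib (nxt σ)).card := by
      intro σ hσ
      rw [hFdef]
      rw [Finset.card_image_of_injOn, card_product]
      rintro ⟨p, q⟩ hpq ⟨p', q'⟩ hpq' heq
      obtain ⟨hp, hq⟩ := mem_product.mp hpq
      obtain ⟨hp', hq'⟩ := mem_product.mp hpq'
      obtain ⟨hpe, hppos⟩ := hfibprop σ p hp
      obtain ⟨hqe, hqpos⟩ := hfibprop (nxt σ) q hq
      obtain ⟨hpe', hppos'⟩ := hfibprop σ p' hp'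
      obtain ⟨hqe', hqpos'⟩ := hfibprop (nxt σ) q' hq'
      have h1 : p.1 + q.1 = p'.1 + q'.1 := congrArg Prod.fst heq
      have h2 : p.2 + q.2 = p'.2 + q'.2 := congrArg Prod.snd heq
      rw [hpe, hqe, hpe', hqe'] at h2
      have hσν : σ ≠ nxt σ := ne_of_lt (hnxtlt σ hσ)
      have hq1 : q.1 = q'.1 := by
        rcases mul_eq_zero.mp (by linear_combination σ * h1 - h2 : (σ - nxt σ) * (q.1 - q'.1) = 0) with h | h
        · exact absurd (by linarith : σ = nxt σ) hσν
        · linarith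
      have hp1 : p.1 = p'.1 := by linarith
      have hP : p = p' := Prod.ext hp1 (by rw [hpe, hpe', hp1])
      have hQ : q = q' := Prod.ext hq1 (by rw [hqe, hqe', hq1])
      rw [hP, hQ]
    -- slope bounds on elements of F σ
    have hslope : ∀ σ ∈ E, ∀ z ∈ F σ, 0 < z.1 ∧ σ * z.1 < z.2 ∧ z.2 < nxt σ * z.1 := by
      intro σ hσ z hz
      obtain ⟨pq, hpq, rfl⟩ := mem_image.mp hz
      obtain ⟨hp, hq⟩ := mem_product.mp hpq
      obtain ⟨hpe, hppos⟩ := hfibprop σ pq.1 hp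
      obtain ⟨hqe, hqpos⟩ := hfibprop (nxt σ) pq.2 hq
      have hlt := hnxtlt σ hσ
      constructor
      · show (0:ℝ) < pq.1.1 + pq.2.1
        positivity
      constructor
      · show σ * (pq.1.1 + pq.2.1) < pq.1.2 + pq.2.2
        rw [hpe, hqe]; nlinarith
      · show pq.1.2 + pq.2.2 < nxt σ * (pq.1.1 + pq.2.1)
        rw [hpe, hqe]; nlinarith
    -- disjointness
    have hdisj : ∀ σ1 ∈ E, ∀ σ2 ∈ E, σ1 ≠ σ2 → Disjoint (F σ1) (F σ2) := by
      have main : ∀ σ1 ∈ E, ∀ σ2 ∈ E, σ1 < σ2 → Disjoint (F σ1) (F σ2) := by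
        intro σ1 h1 σ2 h2 hlt
        rw [disjoint_left]
        intro z hz1 hz2
        obtain ⟨hz1pos, hz1lo, hz1hi⟩ := hslope σ1 h1 z hz1
        obtain ⟨hz2pos, hz2lo, hz2hi⟩ := hslope σ2 h2 z hz2
        have hν : nxt σ1 ≤ σ2 := hnxtmin σ1 h1 σ2 (mem_of_mem_erase h2) hlt
        nlinarith
      intro σ1 h1 σ2 h2 hne12
      rcases lt_or_gt_of_ne hne12 with h | h
      · exact main σ1 h1 σ2 h2 h
      · exact (main σ2 h2 σ1 h1 h).symm
    -- count
    have hsum_le : ∑ σ ∈ E, (F σ).card ≤ RR.card := by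
      rw [← Finset.card_biUnion hdisj]
      apply Finset.card_le_card
      exact Finset.biUnion_subset.mpr hFsub
    have hlow : E.card * (τ * τ) ≤ ∑ σ ∈ E, (F σ).card := by
      calc E.card * (τ * τ) = ∑ _σ ∈ E, τ * τ := by
            rw [Finset.sum_const, smul_eq_mul]
        _ ≤ ∑ σ ∈ E, (F σ).card := by
            apply Finset.sum_le_sum
            intro σ hσ
            rw [hFcard σ hσ]
            exact Nat.mul_le_mul (hT σ (mem_of_mem_erase hσ)) (hT (nxt σ) (hnxtT σ hσ))
    have : E.card * (τ * τ) ≤ RR.card := le_trans hlow hsum_le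
    have hcast : ((E.card : ℝ)) * ((τ:ℝ) * τ) ≤ (RR.card : ℝ) := by exact_mod_cast this
    have hEc : (E.card : ℝ) = (T.card : ℝ) - 1 := by
      rw [hEcard]
      have : 1 ≤ T.card := by omega
      push_cast [Nat.cast_sub this]
      ring
    rw [hEc] at hcast
    nlinarith [hcast]

private lemma assemble_sum (n L K : ℕ) (hL1 : 1 ≤ L) (hK1 : 1 ≤ K) (c : ℕ → ℝ)
    (hc0 : ∀ τ, 0 ≤ c τ)
    (hcK : ∀ τ, c τ ≤ K)
    (hcore : ∀ τ, 1 ≤ τ → c τ ≤ 1 + (L:ℝ)^2 / (τ:ℝ)^2)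
    (hsum : ((n:ℝ))^2 = ∑ τ ∈ Icc 1 n, c τ) :
    ((n:ℝ))^2 ≤ n + K + 2 * L * Real.sqrt K := by
  have hK0 : (0:ℝ) < K := by exact_mod_cast hK1
  have hL0 : (0:ℝ) < L := by exact_mod_cast hL1
  set sK := Real.sqrt K with hsK
  have hsK0 : 0 < sK := Real.sqrt_pos.mpr hK0
  have hKs : sK * sK = K := Real.mul_self_sqrt hK0.le
  set r := (L:ℝ) / sK with hr
  have hr0 : 0 < r := div_pos hL0 hsK0
  set t := ⌈r⌉₊ with ht
  have ht1 : 1 ≤ t := Nat.one_le_iff_ne_zero.mpr (by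
    intro h
    have := Nat.ceil_pos.mpr hr0
    omega)
  have htr : r ≤ (t:ℝ) := Nat.le_ceil r
  have htr1 : (t:ℝ) < r + 1 := Nat.ceil_lt_add_one hr0.le
  -- split the sum
  have hsplit : ∑ τ ∈ Icc 1 n, c τ =
      ∑ τ ∈ (Icc 1 n).filter (fun τ => τ ≤ t), c τ +
      ∑ τ ∈ (Icc 1 n).filter (fun τ => ¬ τ ≤ t), c τ :=
    (Finset.sum_filter_add_sum_filter_not _ _ _).symm
  -- part 1
  have hpart1 : ∑ τ ∈ (Icc 1 n).filter (fun τ => τ ≤ t), c τ ≤ (t:ℝ) * K := by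
    have hsub : (Icc 1 n).filter (fun τ => τ ≤ t) ⊆ Icc 1 t := by
      intro τ hτ
      simp only [mem_filter, mem_Icc] at hτ ⊢
      exact ⟨hτ.1.1, hτ.2⟩
    calc ∑ τ ∈ (Icc 1 n).filter (fun τ => τ ≤ t), c τ
        ≤ ∑ τ ∈ Icc 1 t, c τ :=
          Finset.sum_le_sum_of_subset_of_nonneg hsub (fun τ _ _ => hc0 τ)
      _ ≤ (Icc 1 t).card • (K:ℝ) := Finset.sum_le_card_nsmul _ _ _ (fun τ _ => hcK τ)
      _ = (t:ℝ) * K := by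
          rw [Nat.card_Icc]
          simp [nsmul_eq_mul]
  -- part 2
  have hpart2 : ∑ τ ∈ (Icc 1 n).filter (fun τ => ¬ τ ≤ t), c τ ≤
      (n:ℝ) + (L:ℝ)^2 * ((t:ℝ))⁻¹ := by
    have hsub : (Icc 1 n).filter (fun τ => ¬ τ ≤ t) ⊆ Ioc t n := by
      intro τ hτ
      simp only [mem_filter, mem_Icc, mem_Ioc, not_le] at hτ ⊢
      exact ⟨hτ.2, hτ.1.2⟩
    have step1 : ∑ τ ∈ (Icc 1 n).filter (fun τ => ¬ τ ≤ t), c τ ≤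
        ∑ τ ∈ (Icc 1 n).filter (fun τ => ¬ τ ≤ t), (1 + (L:ℝ)^2 / (τ:ℝ)^2) := by
      apply Finset.sum_le_sum
      intro τ hτ
      have : 1 ≤ τ := (mem_Icc.mp (mem_of_mem_filter τ hτ)).1
      exact hcore τ this
    have step2 : ∑ τ ∈ (Icc 1 n).filter (fun τ => ¬ τ ≤ t), (1 + (L:ℝ)^2 / (τ:ℝ)^2) ≤
        ∑ τ ∈ Ioc t n, (1 + (L:ℝ)^2 / (τ:ℝ)^2) := by
      apply Finset.sum_le_sum_of_subset_of_nonneg hsub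
      intro τ _ _
      positivity
    have step3 : ∑ τ ∈ Ioc t n, (1 + (L:ℝ)^2 / (τ:ℝ)^2) =
        ((Ioc t n).card : ℝ) + (L:ℝ)^2 * ∑ τ ∈ Ioc t n, ((τ:ℝ)^2)⁻¹ := by
      rw [Finset.sum_add_distrib, Finset.mul_sum]
      simp [div_eq_mul_inv]
    have step4 : ∑ τ ∈ Ioc t n, ((τ:ℝ)^2)⁻¹ ≤ ((t:ℝ))⁻¹ := by
      rcases le_or_gt t n with h | h
      · calc ∑ τ ∈ Ioc t n, ((τ:ℝ)^2)⁻¹ ≤ (t:ℝ)⁻¹ - (n:ℝ)⁻¹ :=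
              sum_Ioc_inv_sq_le_sub (by omega) h
          _ ≤ (t:ℝ)⁻¹ := by
              have : (0:ℝ) ≤ (n:ℝ)⁻¹ := by positivity
              linarith
      · rw [Finset.Ioc_eq_empty (by omega)]
        simp
    have step5 : ((Ioc t n).card : ℝ) ≤ n := by
      rw [Nat.card_Ioc]
      exact_mod_cast Nat.sub_le n t
    calc ∑ τ ∈ (Icc 1 n).filter (fun τ => ¬ τ ≤ t), c τ
        ≤ ∑ τ ∈ Ioc t n, (1 + (L:ℝ)^2 / (τ:ℝ)^2) := le_trans step1 step2
      _ = ((Ioc t n).card : ℝ) + (L:ℝ)^2 * ∑ τ ∈ Ioc t n, ((τ:ℝ)^2)⁻¹ := step3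
      _ ≤ (n:ℝ) + (L:ℝ)^2 * ((t:ℝ))⁻¹ := by
          apply add_le_add step5
          apply mul_le_mul_of_nonneg_left step4 (by positivity)
  -- bounds on t-terms
  have hrK : r * K = L * sK := by
    have hds : (K:ℝ) / sK = sK := Real.div_sqrt
    calc r * K = (L:ℝ) * ((K:ℝ) / sK) := by rw [hr]; ring
      _ = L * sK := by rw [hds]
  have htK : (t:ℝ) * K ≤ L * sK + K := by
    have := mul_le_mul_of_nonneg_right htr1.le hK0.le
    calc (t:ℝ) * K ≤ (r + 1) * K := this
      _ = r * K + K := by ring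
      _ = L * sK + K := by rw [hrK]
  have hLt : (L:ℝ)^2 * ((t:ℝ))⁻¹ ≤ L * sK := by
    have ht0 : (0:ℝ) < t := lt_of_lt_of_le hr0 htr
    have hinv : ((t:ℝ))⁻¹ ≤ r⁻¹ := inv_anti₀ hr0 htr
    have : (L:ℝ)^2 * ((t:ℝ))⁻¹ ≤ (L:ℝ)^2 * r⁻¹ :=
      mul_le_mul_of_nonneg_left hinv (by positivity)
    have heq : (L:ℝ)^2 * r⁻¹ = L * sK := by
      rw [hr, inv_div]
      field_simp
    linarith
  calc ((n:ℝ))^2 = ∑ τ ∈ Icc 1 n, c τ := hsum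
    _ = _ + _ := hsplit
    _ ≤ (t:ℝ) * K + ((n:ℝ) + (L:ℝ)^2 * ((t:ℝ))⁻¹) := add_le_add hpart1 hpart2
    _ ≤ (L * sK + K) + ((n:ℝ) + L * sK) := add_le_add htK (by linarith [hLt])
    _ = n + K + 2 * L * sK := by ring

private lemma final_step (n L K : ℕ) (h9 : 9 ≤ n)
    (hmain : ((n:ℝ))^2 ≤ n + K + 2 * L * Real.sqrt K) :
    ((max L K : ℕ) : ℝ) ≥ (n:ℝ) ^ ((4:ℝ)/3) / 2 := by
  set x := (n:ℝ) with hx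
  have hx9 : (9:ℝ) ≤ x := by rw [hx]; exact_mod_cast h9
  have hx0 : (0:ℝ) < x := by linarith
  set Mx := max L K with hMx
  have hLM : (L:ℝ) ≤ (Mx:ℝ) := by exact_mod_cast le_max_left L K
  have hKM : (K:ℝ) ≤ (Mx:ℝ) := by exact_mod_cast le_max_right L K
  have hM0 : (0:ℝ) ≤ (Mx:ℝ) := Nat.cast_nonneg _
  have hsM : Real.sqrt K ≤ Real.sqrt Mx := Real.sqrt_le_sqrt hKM
  have hmain2 : x^2 ≤ x + (Mx:ℝ) + 2 * Mx * Real.sqrt Mx := by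
    have h1 : 2 * (L:ℝ) * Real.sqrt K ≤ 2 * (Mx:ℝ) * Real.sqrt Mx := by
      have hL' : 2 * (L:ℝ) ≤ 2 * (Mx:ℝ) := by linarith
      exact mul_le_mul hL' hsM (Real.sqrt_nonneg _) (by linarith)
    calc x^2 ≤ x + (K:ℝ) + 2 * L * Real.sqrt K := hmain
      _ ≤ x + (Mx:ℝ) + 2 * Mx * Real.sqrt Mx := by linarith
  by_contra hcon
  push_neg at hcon
  set y := x ^ ((4:ℝ)/3) / 2 with hy
  have hy0 : 0 < y := by
    have : 0 < x ^ ((4:ℝ)/3) := Real.rpow_pos_of_pos hx0 _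
    rw [hy]; linarith
  have hMy : (Mx:ℝ) < y := hcon
  -- compute y * sqrt y
  have h23 : (x ^ ((2:ℝ)/3)) ^ (2:ℕ) = x ^ ((4:ℝ)/3) := by
    rw [← Real.rpow_natCast (x ^ ((2:ℝ)/3)) 2, ← Real.rpow_mul hx0.le]
    norm_num
  have h230 : 0 ≤ x ^ ((2:ℝ)/3) := Real.rpow_nonneg hx0.le _
  have hs20 : (0:ℝ) < Real.sqrt 2 := Real.sqrt_pos.mpr (by norm_num)
  have hysq : y = (x ^ ((2:ℝ)/3) / Real.sqrt 2)^2 := by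
    rw [div_pow, h23, Real.sq_sqrt (by norm_num : (0:ℝ) ≤ 2)]
  have hsy : Real.sqrt y = x ^ ((2:ℝ)/3) / Real.sqrt 2 := by
    rw [hysq, Real.sqrt_sq (by positivity)]
  have hxx : x ^ ((4:ℝ)/3) * x ^ ((2:ℝ)/3) = x^2 := by
    rw [← Real.rpow_add hx0]
    norm_num
  have hyy : 2 * y * Real.sqrt y = x^2 / Real.sqrt 2 := by
    rw [hsy, hy, ← hxx]
    field_simp
  -- chain
  have hsMy : Real.sqrt Mx ≤ Real.sqrt y := Real.sqrt_le_sqrt hMy.le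
  have hchain : (Mx:ℝ) + 2 * Mx * Real.sqrt Mx < y + 2 * y * Real.sqrt y := by
    have h2 : 2 * (Mx:ℝ) * Real.sqrt Mx ≤ 2 * y * Real.sqrt y := by
      have := mul_le_mul (mul_le_mul_of_nonneg_left hMy.le (by norm_num : (0:ℝ) ≤ 2)) hsMy
        (Real.sqrt_nonneg _) (by positivity)
      linarith [this]
    linarith
  have hlt : x^2 < x + y + 2 * y * Real.sqrt y := by linarith [hmain2, hchain]
  rw [hyy] at hlt
  have hbig := arith_big x hx9
  rw [← hy] at hbig
  linarith


theorem radius_angle_estimate (A : Finset ℝ) (hA : ∀ a ∈ A, 0 < a) :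
    (max (((A ×ˢ A).image (fun p => p.1 ^ 2 + p.2 ^ 2)).card)
        (((A ×ˢ A).image (fun p => p.1 / p.2)).card) : ℝ)
      ≥ (A.card : ℝ) ^ ((4 : ℝ) / 3) / 2 := by
  set n := A.card with hn
  set RF := (A ×ˢ A).image (fun p => p.1 ^ 2 + p.2 ^ 2) with hRF
  set QF := (A ×ˢ A).image (fun p => p.1 / p.2) with hQF
  set L := RF.card with hL
  set K := QF.card with hK
  -- trivial lower bound : L ≥ n
  have hLn : n ≤ L := by
    have hinj : Set.InjOn (fun a : ℝ => a ^ 2 + a ^ 2) A := by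
      intro a ha b hb h
      simp only at h
      nlinarith [hA a ha, hA b hb]
    have him : A.image (fun a : ℝ => a ^ 2 + a ^ 2) ⊆ RF := by
      intro z hz
      obtain ⟨a, ha, rfl⟩ := mem_image.mp hz
      exact mem_image.mpr ⟨(a, a), mem_product.mpr ⟨ha, ha⟩, rfl⟩
    calc n = (A.image (fun a : ℝ => a ^ 2 + a ^ 2)).card :=
          (Finset.card_image_of_injOn hinj).symm
      _ ≤ L := Finset.card_le_card him
  rcases le_or_gt n 8 with hsmall | hbig
  · -- small case : n ≤ 8
    have h8 : ((n:ℝ)) ≤ 8 := by exact_mod_cast hsmall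
    have h1 : ((n:ℝ)) ^ ((4:ℝ)/3) / 2 ≤ (n:ℝ) := arith_small _ (Nat.cast_nonneg n) h8
    have h2 : (n:ℝ) ≤ max (L:ℝ) (K:ℝ) :=
      le_trans (by exact_mod_cast hLn) (le_max_left _ _)
    exact le_trans h1 h2
  · -- main case : n ≥ 9
    have h9 : 9 ≤ n := hbig
    have hAne : A.Nonempty := card_pos.mp (by omega)
    -- the grid of squares
    set B := A.image (fun a => a ^ 2) with hB
    have hBmem : ∀ x ∈ B, ∃ a ∈ A, a ^ 2 = x := by
      intro x hx
      obtain ⟨a, ha, rfl⟩ := mem_image.mp hx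
      exact ⟨a, ha, rfl⟩
    have hBpos : ∀ x ∈ B, 0 < x := by
      intro x hx
      obtain ⟨a, ha, rfl⟩ := hBmem x hx
      exact pow_pos (hA a ha) 2
    have hBcard : B.card = n := by
      apply card_image_of_injOn
      intro a ha b hb h
      simp only at h
      nlinarith [hA a ha, hA b hb]
    set G := B ×ˢ B with hG
    have hGpos : ∀ p ∈ G, 0 < p.1 ∧ 0 < p.2 := by
      intro p hp
      obtain ⟨h1, h2⟩ := mem_product.mp hp
      exact ⟨hBpos _ h1, hBpos _ h2⟩
    have hGsub : ∀ p ∈ G, p.1 ∈ B := fun p hp => (mem_product.mp hp).1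
    have hGcard : G.card = n ^ 2 := by
      rw [hG, card_product, hBcard]; ring
    have hsumRR : ∀ p ∈ G, ∀ q ∈ G, p + q ∈ RF ×ˢ RF := by
      intro p hp q hq
      obtain ⟨hp1, hp2⟩ := mem_product.mp hp
      obtain ⟨hq1, hq2⟩ := mem_product.mp hq
      obtain ⟨a, ha, hae⟩ := hBmem _ hp1
      obtain ⟨b, hb, hbe⟩ := hBmem _ hp2
      obtain ⟨c, hc, hce⟩ := hBmem _ hq1
      obtain ⟨d, hd, hde⟩ := hBmem _ hq2
      rw [mem_product]
      constructor
      · have he : (p + q).1 = a ^ 2 + c ^ 2 := by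
          rw [Prod.fst_add, hae, hce]
        rw [he, hRF]
        exact mem_image.mpr ⟨(a, c), mem_product.mpr ⟨ha, hc⟩, rfl⟩
      · have he : (p + q).2 = b ^ 2 + d ^ 2 := by
          rw [Prod.snd_add, hbe, hde]
        rw [he, hRF]
        exact mem_image.mpr ⟨(b, d), mem_product.mpr ⟨hb, hd⟩, rfl⟩
    -- the slope set
    set Sl := G.image (fun p : ℝ × ℝ => p.2 / p.1) with hSl
    have hQFpos : ∀ q ∈ QF, 0 < q := by
      intro q hq
      obtain ⟨p, hp, rfl⟩ := mem_image.mp hq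
      obtain ⟨h1, h2⟩ := mem_product.mp hp
      exact div_pos (hA _ h1) (hA _ h2)
    have hSlQF : Sl = QF.image (fun q => q ^ 2) := by
      ext z
      constructor
      · intro hz
        obtain ⟨p, hp, rfl⟩ := mem_image.mp hz
        obtain ⟨h1, h2⟩ := mem_product.mp hp
        obtain ⟨a, ha, hae⟩ := hBmem _ h1
        obtain ⟨b, hb, hbe⟩ := hBmem _ h2
        refine mem_image.mpr ⟨b / a, ?_, ?_⟩
        · exact mem_image.mpr ⟨(b, a), mem_product.mpr ⟨hb, ha⟩, rfl⟩
        · rw [div_pow, hae, hbe]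
      · intro hz
        obtain ⟨q, hq, rfl⟩ := mem_image.mp hz
        obtain ⟨p, hp, rfl⟩ := mem_image.mp hq
        obtain ⟨h1, h2⟩ := mem_product.mp hp
        refine mem_image.mpr ⟨(p.2 ^ 2, p.1 ^ 2), ?_, ?_⟩
        · exact mem_product.mpr ⟨mem_image_of_mem _ h2, mem_image_of_mem _ h1⟩
        · simp only
          rw [div_pow]
    have hSlcard : Sl.card = K := by
      rw [hSlQF, hQF]
      apply card_image_of_injOn
      intro q hq q' hq' h
      simp only at h
      nlinarith [hQFpos q hq, hQFpos q' hq']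
    -- ray fibers
    set m : ℝ → ℕ := fun σ => (G.filter (fun p => p.2 / p.1 = σ)).card with hm
    have hfibsum : ∑ σ ∈ Sl, m σ = n ^ 2 := by
      rw [← hGcard]
      exact (card_eq_sum_card_fiberwise (fun p hp => mem_image_of_mem _ hp)).symm
    have hmn : ∀ σ, m σ ≤ n := by
      intro σ
      rw [← hBcard]
      apply card_le_card_of_injOn (fun p => p.1)
      · intro p hp
        exact hGsub p (mem_of_mem_filter p hp)
      · intro p hp p' hp' h
        simp only at h
        have e1 : p.2 / p.1 = σ := (mem_filter.mp hp).2
        have e2 : p'.2 / p'.1 = σ := (mem_filter.mp hp').2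
        have pos1 : 0 < p.1 := (hGpos p (mem_of_mem_filter p hp)).1
        have pos2 : 0 < p'.1 := (hGpos p' (mem_of_mem_filter p' hp')).1
        have e1' : p.2 = σ * p.1 := by
          rw [div_eq_iff (ne_of_gt pos1)] at e1; exact e1
        have e2' : p'.2 = σ * p'.1 := by
          rw [div_eq_iff (ne_of_gt pos2)] at e2; exact e2
        exact Prod.ext h (by rw [e1', e2', h])
    -- layer cake
    set T : ℕ → Finset ℝ := fun τ => Sl.filter (fun σ => τ ≤ m σ) with hT
    have hlayer : ∑ σ ∈ Sl, m σ = ∑ τ ∈ Icc 1 n, (T τ).card := by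
      have inner : ∀ σ ∈ Sl, m σ = ∑ τ ∈ Icc 1 n, (if τ ≤ m σ then 1 else 0) := by
        intro σ _
        have hfe : (Icc 1 n).filter (fun τ => τ ≤ m σ) = Icc 1 (m σ) := by
          ext τ
          simp only [mem_filter, mem_Icc]
          constructor
          · rintro ⟨⟨h1, _⟩, h3⟩; exact ⟨h1, h3⟩
          · rintro ⟨h1, h2⟩; exact ⟨⟨h1, le_trans h2 (hmn σ)⟩, h2⟩
        calc m σ = ∑ _τ ∈ Icc 1 (m σ), 1 := by simp [Nat.card_Icc]
          _ = ∑ _τ ∈ (Icc 1 n).filter (fun τ => τ ≤ m σ), 1 := by rw [hfe]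
          _ = ∑ τ ∈ Icc 1 n, (if τ ≤ m σ then 1 else 0) := Finset.sum_filter _ _
      calc ∑ σ ∈ Sl, m σ
          = ∑ σ ∈ Sl, ∑ τ ∈ Icc 1 n, (if τ ≤ m σ then 1 else 0) :=
            Finset.sum_congr rfl inner
        _ = ∑ τ ∈ Icc 1 n, ∑ σ ∈ Sl, (if τ ≤ m σ then 1 else 0) := Finset.sum_comm
        _ = ∑ τ ∈ Icc 1 n, (T τ).card := by
            apply Finset.sum_congr rfl
            intro τ _
            rw [Finset.card_filter]
    -- cardinalities are at least 1
    have hL1 : 1 ≤ L := le_trans (by omega) hLn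
    have hK1 : 1 ≤ K := by
      rw [hK]
      apply Nat.one_le_iff_ne_zero.mpr
      apply Finset.card_ne_zero_of_mem (a := A.min' hAne / A.min' hAne)
      exact mem_image.mpr ⟨(A.min' hAne, A.min' hAne),
        mem_product.mpr ⟨A.min'_mem hAne, A.min'_mem hAne⟩, rfl⟩
    -- the core estimate for each threshold
    have hcore : ∀ τ : ℕ, 1 ≤ τ → ((T τ).card : ℝ) ≤ 1 + (L:ℝ)^2 / (τ:ℝ)^2 := by
      intro τ hτ1
      have hsec := sector_core G (RF ×ˢ RF) hGpos hsumRR τ (T τ)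
        (fun σ hσ => (mem_filter.mp hσ).2)
      have hcardRR : ((RF ×ˢ RF).card : ℝ) = (L:ℝ)^2 := by
        rw [card_product]
        push_cast
        ring
      rw [hcardRR] at hsec
      have hτ0 : (0:ℝ) < (τ:ℝ)^2 := by
        have : (0:ℝ) < (τ:ℝ) := by exact_mod_cast hτ1
        positivity
      have h2 : ((T τ).card : ℝ) - 1 ≤ (L:ℝ)^2 / (τ:ℝ)^2 := by
        rw [le_div_iff₀ hτ0]
        exact hsec
      linarith
    -- assemble
    have hsum' : ((n:ℝ))^2 = ∑ τ ∈ Icc 1 n, ((T τ).card : ℝ) := by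
      have : ((n^2 : ℕ) : ℝ) = ((∑ τ ∈ Icc 1 n, (T τ).card : ℕ) : ℝ) := by
        rw [← hfibsum, hlayer]
      push_cast at this
      exact this
    have hmain : ((n:ℝ))^2 ≤ n + K + 2 * L * Real.sqrt K := by
      apply assemble_sum n L K hL1 hK1 (fun τ => ((T τ).card : ℝ))
      · intro τ
        exact Nat.cast_nonneg _
      · intro τ
        have : (T τ).card ≤ K := by
          rw [← hSlcard]
          exact card_le_card (filter_subset _ _)
        exact_mod_cast this
      · exact hcore
      · exact hsum'
    rw [← Nat.cast_max]
    exact final_step n L K h9 hmain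
end

section
/- Let A be a finite set of positive real numbers and let n be a positive integer. Then |A+A|^2 ≥ n · |{(a,b) ∈ A×A : m(a/b) ≥ n}|, where for a real number z, m(z) = |{(c,d) ∈ A×A : c/d = z}| is the number of representations of z as a ratio of two elements of A. -/
open Finset Pointwise

theorem solymosi_observation (A : Finset ℝ) (hA : ∀ a ∈ A, 0 < a) (n : ℕ) (hn : 0 < n)
    (m : ℝ → ℕ) (hm : ∀ z : ℝ, m z = ((A ×ˢ A).filter (fun p => p.1 / p.2 = z)).card) :
    (A + A).card ^ 2 ≥ n * ((A ×ˢ A).filter (fun p => n ≤ m (p.1 / p.2))).card := by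
  classical
  set B := (A ×ˢ A).filter (fun p => n ≤ m (p.1 / p.2)) with hBdef
  rcases B.eq_empty_or_nonempty with hB | hBne
  · rw [hB]; simp
  obtain ⟨p₀, hp₀⟩ := hBne
  have hBne : B.Nonempty := ⟨p₀, hp₀⟩
  have hAne : A.Nonempty := ⟨p₀.1, (Finset.mem_product.1 (Finset.mem_filter.1 hp₀).1).1⟩
  set a₀ := A.min' hAne with ha₀def
  have ha₀A : a₀ ∈ A := A.min'_mem hAne
  have ha₀pos : 0 < a₀ := hA _ ha₀A
  set R := B.image (fun p => p.1 / p.2) with hRdef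
  have hRne : R.Nonempty := hBne.image _
  set M := R.max' hRne with hMdef
  have hMR : M ∈ R := R.max'_mem hRne
  have hBmem : ∀ p ∈ B, p.1 ∈ A ∧ p.2 ∈ A ∧ n ≤ m (p.1 / p.2) := by
    intro p hp
    have hp' := Finset.mem_filter.1 hp
    have := Finset.mem_product.1 hp'.1
    exact ⟨this.1, this.2, hp'.2⟩
  have hRpos : ∀ z ∈ R, 0 < z := by
    intro z hz
    obtain ⟨p, hp, rfl⟩ := Finset.mem_image.1 hz
    have h := hBmem p hp
    exact div_pos (hA _ h.1) (hA _ h.2.1)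
  have hRn : ∀ z ∈ R, n ≤ m z := by
    intro z hz
    obtain ⟨p, hp, rfl⟩ := Finset.mem_image.1 hz
    exact (hBmem p hp).2.2
  set X : ℝ → Finset ℝ := fun z => A.filter (fun c => c / z ∈ A) with hXdef
  have hXcard : ∀ z ∈ R, m z = (X z).card := by
    intro z hz
    have hz0 : z ≠ 0 := ne_of_gt (hRpos z hz)
    rw [hm]
    apply Finset.card_bij (fun p _ => p.1)
    · intro p hp
      have hp' := Finset.mem_filter.1 hp
      have hpa := Finset.mem_product.1 hp'.1
      have h2 : p.2 ≠ 0 := ne_of_gt (hA _ hpa.2)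
      have h1 : p.1 ≠ 0 := ne_of_gt (hA _ hpa.1)
      have hpd : p.1 / z = p.2 := by rw [← hp'.2]; field_simp
      simp only [hXdef, Finset.mem_filter]
      exact ⟨hpa.1, by rw [hpd]; exact hpa.2⟩
    · intro p hp q hq h
      have hp' := Finset.mem_filter.1 hp
      have hq' := Finset.mem_filter.1 hq
      have hp2 : p.2 ≠ 0 := ne_of_gt (hA _ (Finset.mem_product.1 hp'.1).2)
      have hq2 : q.2 ≠ 0 := ne_of_gt (hA _ (Finset.mem_product.1 hq'.1).2)
      have e1 : p.1 = z * p.2 := by rw [← hp'.2]; field_simp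
      have e2 : q.1 = z * q.2 := by rw [← hq'.2]; field_simp
      have : z * p.2 = z * q.2 := by rw [← e1, ← e2, h]
      exact Prod.ext h (mul_left_cancel₀ hz0 this)
    · intro c hc
      have hc' := Finset.mem_filter.1 hc
      have hc0 : c ≠ 0 := ne_of_gt (hA _ hc'.1)
      refine ⟨(c, c / z), Finset.mem_filter.2 ⟨Finset.mem_product.2 ⟨hc'.1, hc'.2⟩, ?_⟩, rfl⟩
      field_simp
  have hXn : ∀ z ∈ R, n ≤ (X z).card := fun z hz => (hXcard z hz) ▸ hRn z hz
  set e : ℝ → ℕ → ℝ := fun z j => ((X z).sort (· ≤ ·)).getD j 0 with hedef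
  have he_mem : ∀ z : ℝ, ∀ j < (X z).card, e z j ∈ X z := by
    intro z j hj
    have hl : j < ((X z).sort (· ≤ ·)).length := by rwa [Finset.length_sort]
    rw [hedef]
    simp only
    rw [List.getD_eq_getElem _ _ hl]
    exact (Finset.mem_sort _).1 (List.getElem_mem hl)
  have he_inj : ∀ z : ℝ, ∀ j < (X z).card, ∀ j' < (X z).card, e z j = e z j' → j = j' := by
    intro z j hj j' hj' h
    have hl : j < ((X z).sort (· ≤ ·)).length := by rwa [Finset.length_sort]
    have hl' : j' < ((X z).sort (· ≤ ·)).length := by rwa [Finset.length_sort]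
    rw [hedef] at h
    simp only at h
    rw [List.getD_eq_getElem _ _ hl, List.getD_eq_getElem _ _ hl'] at h
    exact ((Finset.sort_nodup _ _).getElem_inj_iff).1 h
  set succ : ℝ → ℝ := fun z =>
    if h : (R.filter (fun w => z < w)).Nonempty then (R.filter (fun w => z < w)).min' h
    else 0 with hsuccdef
  have hsucc : ∀ z ∈ R, z ≠ M →
      succ z ∈ R ∧ z < succ z ∧ ∀ w ∈ R, z < w → succ z ≤ w := by
    intro z hz hzM
    have hzM' : z < M := lt_of_le_of_ne (R.le_max' z hz) hzM
    have hne : (R.filter (fun w => z < w)).Nonempty :=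
      ⟨M, Finset.mem_filter.2 ⟨hMR, hzM'⟩⟩
    have hmem := Finset.min'_mem _ hne
    have hmem' := Finset.mem_filter.1 hmem
    have hval : succ z = (R.filter (fun w => z < w)).min' hne := by
      rw [hsuccdef]; simp only [dif_pos hne]
    refine ⟨by rw [hval]; exact hmem'.1, by rw [hval]; exact hmem'.2, ?_⟩
    intro w hw hzw
    rw [hval]
    exact Finset.min'_le _ w (Finset.mem_filter.2 ⟨hw, hzw⟩)
  have hp1eq : ∀ p ∈ B, p.1 = (p.1 / p.2) * p.2 := by
    intro p hp
    have h2 : p.2 ≠ 0 := ne_of_gt (hA _ (hBmem p hp).2.1)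
    field_simp
  have sector : ∀ z z' b d : ℝ, 0 < b → 0 < d → z < z' →
      z < (z * b + z' * d) / (b + d) ∧ (z * b + z' * d) / (b + d) < z' := by
    intro z z' b d hb hd hzz
    have hbd : 0 < b + d := by linarith
    constructor
    · rw [lt_div_iff₀ hbd]; nlinarith
    · rw [div_lt_iff₀ hbd]; nlinarith
  set F : (ℝ × ℝ) × ℕ → ℝ × ℝ := fun q =>
    if q.1.1 / q.1.2 = M then (q.1.1 + e M q.2, q.1.2 + a₀)
    else (q.1.1 + e (succ (q.1.1 / q.1.2)) q.2,
      q.1.2 + e (succ (q.1.1 / q.1.2)) q.2 / succ (q.1.1 / q.1.2)) with hFdef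
  have hFmax : ∀ (p : ℝ × ℝ) (j : ℕ), p.1 / p.2 = M → F (p, j) = (p.1 + e M j, p.2 + a₀) := by
    intro p j h
    rw [hFdef]
    simp only
    rw [if_pos h]
  have hFne : ∀ (p : ℝ × ℝ) (j : ℕ), p.1 / p.2 ≠ M →
      F (p, j) = (p.1 + e (succ (p.1 / p.2)) j,
        p.2 + e (succ (p.1 / p.2)) j / succ (p.1 / p.2)) := by
    intro p j h
    rw [hFdef]
    simp only
    rw [if_neg h]
  -- ratio bounds
  have hratio_ge : ∀ p ∈ B, ∀ j < n, p.1 / p.2 = M →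
      M ≤ (F (p, j)).1 / (F (p, j)).2 := by
    intro p hp j hj hzM
    rw [hFmax p j hzM]
    show M ≤ (p.1 + e M j) / (p.2 + a₀)
    have hc : e M j ∈ X M := he_mem M j (lt_of_lt_of_le hj (hXn M hMR))
    have hc' := Finset.mem_filter.1 hc
    have hMpos : 0 < M := hRpos M hMR
    have hca : a₀ ≤ e M j / M := Finset.min'_le _ _ hc'.2
    have hca' : a₀ * M ≤ e M j := (le_div_iff₀ hMpos).1 hca
    have hp2 : 0 < p.2 := hA _ (hBmem p hp).2.1
    have hp1 : p.1 = M * p.2 := by rw [← hzM]; exact hp1eq p hp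
    rw [le_div_iff₀ (by linarith : (0:ℝ) < p.2 + a₀)]
    nlinarith
  have hratio_lt : ∀ p ∈ B, ∀ j < n, p.1 / p.2 ≠ M →
      p.1 / p.2 < (F (p, j)).1 / (F (p, j)).2 ∧
      (F (p, j)).1 / (F (p, j)).2 < succ (p.1 / p.2) := by
    intro p hp j hj hzM
    have hz : p.1 / p.2 ∈ R := Finset.mem_image.2 ⟨p, hp, rfl⟩
    obtain ⟨hz'R, hzz', _⟩ := hsucc _ hz hzM
    have hz'0 : succ (p.1 / p.2) ≠ 0 := ne_of_gt (hRpos _ hz'R)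
    have hc : e (succ (p.1 / p.2)) j ∈ X (succ (p.1 / p.2)) :=
      he_mem _ j (lt_of_lt_of_le hj (hXn _ hz'R))
    have hc' := Finset.mem_filter.1 hc
    have hd : 0 < e (succ (p.1 / p.2)) j / succ (p.1 / p.2) := hA _ hc'.2
    have hp2 : 0 < p.2 := hA _ (hBmem p hp).2.1
    have hceq : succ (p.1 / p.2) * (e (succ (p.1 / p.2)) j / succ (p.1 / p.2)) =
        e (succ (p.1 / p.2)) j := by field_simp
    have hp1 : p.1 = (p.1 / p.2) * p.2 := hp1eq p hp
    rw [hFne p j hzM]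
    show p.1 / p.2 < (p.1 + e (succ (p.1 / p.2)) j) /
        (p.2 + e (succ (p.1 / p.2)) j / succ (p.1 / p.2)) ∧
      (p.1 + e (succ (p.1 / p.2)) j) /
        (p.2 + e (succ (p.1 / p.2)) j / succ (p.1 / p.2)) < succ (p.1 / p.2)
    have hsec := sector (p.1 / p.2) (succ (p.1 / p.2)) p.2
      (e (succ (p.1 / p.2)) j / succ (p.1 / p.2)) hp2 hd hzz'
    rw [show p.1 + e (succ (p.1 / p.2)) j =
      (p.1 / p.2) * p.2 + succ (p.1 / p.2) * (e (succ (p.1 / p.2)) j / succ (p.1 / p.2)) by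
        rw [hceq, ← hp1]]
    exact hsec
  -- injectivity
  have hinj : ∀ p ∈ B, ∀ j < n, ∀ q ∈ B, ∀ j' < n, F (p, j) = F (q, j') → p = q ∧ j = j' := by
    intro p hp j hj q hq j' hj' hF
    have hz : p.1 / p.2 ∈ R := Finset.mem_image.2 ⟨p, hp, rfl⟩
    have hw : q.1 / q.2 ∈ R := Finset.mem_image.2 ⟨q, hq, rfl⟩
    have hrF : (F (p, j)).1 / (F (p, j)).2 = (F (q, j')).1 / (F (q, j')).2 := by rw [hF]
    by_cases hzM : p.1 / p.2 = M <;> by_cases hwM : q.1 / q.2 = M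
    · -- both maximal
      rw [hFmax p j hzM, hFmax q j' hwM] at hF
      have h1 : p.1 + e M j = q.1 + e M j' := congrArg Prod.fst hF
      have h2 : p.2 + a₀ = q.2 + a₀ := congrArg Prod.snd hF
      have hpq2 : p.2 = q.2 := by linarith
      have hpq1 : p.1 = q.1 := by
        have e1 : p.1 = M * p.2 := by rw [← hzM]; exact hp1eq p hp
        have e2 : q.1 = M * q.2 := by rw [← hwM]; exact hp1eq q hq
        rw [e1, e2, hpq2]
      have hcc : e M j = e M j' := by rw [hpq1] at h1; linarith
      exact ⟨Prod.ext hpq1 hpq2,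
        he_inj M j (lt_of_lt_of_le hj (hXn M hMR)) j' (lt_of_lt_of_le hj' (hXn M hMR)) hcc⟩
    · exfalso
      have h1 := hratio_ge p hp j hj hzM
      have h2 := (hratio_lt q hq j' hj' hwM).2
      have h3 : succ (q.1 / q.2) ≤ M := R.le_max' _ (hsucc _ hw hwM).1
      rw [hrF] at h1
      linarith
    · exfalso
      have h1 := hratio_ge q hq j' hj' hwM
      have h2 := (hratio_lt p hp j hj hzM).2
      have h3 : succ (p.1 / p.2) ≤ M := R.le_max' _ (hsucc _ hz hzM).1
      rw [hrF] at h2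
      linarith
    · rcases lt_trichotomy (p.1 / p.2) (q.1 / q.2) with hlt | heq | hlt
      · exfalso
        have h1 := (hratio_lt p hp j hj hzM).2
        have h2 := (hratio_lt q hq j' hj' hwM).1
        have h3 : succ (p.1 / p.2) ≤ q.1 / q.2 := (hsucc _ hz hzM).2.2 _ hw hlt
        rw [hrF] at h1
        linarith
      · -- same line
        obtain ⟨hz'R, hzz', _⟩ := hsucc _ hz hzM
        have hz'0 : succ (p.1 / p.2) ≠ 0 := ne_of_gt (hRpos _ hz'R)
        rw [hFne p j hzM, hFne q j' hwM, ← heq] at hF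
        have h1 : p.1 + e (succ (p.1 / p.2)) j = q.1 + e (succ (p.1 / p.2)) j' :=
          congrArg Prod.fst hF
        have h2 : p.2 + e (succ (p.1 / p.2)) j / succ (p.1 / p.2) =
            q.2 + e (succ (p.1 / p.2)) j' / succ (p.1 / p.2) := congrArg Prod.snd hF
        have e1 : p.1 = (p.1 / p.2) * p.2 := hp1eq p hp
        have e2 : q.1 = (p.1 / p.2) * q.2 := by rw [heq]; exact hp1eq q hq
        set z := p.1 / p.2
        set z' := succ z
        set c := e z' j
        set c' := e z' j'
        have h2' : p.2 * z' + c = q.2 * z' + c' := by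
          have h3 := congrArg (· * z') h2
          simp only [add_mul] at h3
          rw [div_mul_cancel₀ _ hz'0, div_mul_cancel₀ _ hz'0] at h3
          exact h3
        have h1' : z * p.2 + c = z * q.2 + c' := by rw [e1, e2] at h1; exact h1
        have hkey : (z' - z) * (p.2 - q.2) = 0 := by linear_combination h2' - h1'
        have hpq2 : p.2 = q.2 := by
          rcases mul_eq_zero.1 hkey with h | h
          · exfalso; have : z < z' := hzz'; linarith [h]
          · linarith
        have hcc : c = c' := by
          rw [hpq2] at h1'
          linarith
        have hpq1 : p.1 = q.1 := by rw [e1, e2, hpq2]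
        exact ⟨Prod.ext hpq1 hpq2,
          he_inj z' j (lt_of_lt_of_le hj (hXn _ hz'R)) j' (lt_of_lt_of_le hj' (hXn _ hz'R)) hcc⟩
      · exfalso
        have h1 := (hratio_lt q hq j' hj' hwM).2
        have h2 := (hratio_lt p hp j hj hzM).1
        have h3 : succ (q.1 / q.2) ≤ p.1 / p.2 := (hsucc _ hw hwM).2.2 _ hz hlt
        rw [hrF] at h2
        linarith
  -- mapping
  have hmaps : ∀ x ∈ B ×ˢ Finset.range n, F x ∈ (A + A) ×ˢ (A + A) := by
    rintro ⟨p, j⟩ hx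
    rw [Finset.mem_product] at hx
    obtain ⟨hp, hj⟩ := hx
    rw [Finset.mem_range] at hj
    rw [Finset.mem_product]
    by_cases hzM : p.1 / p.2 = M
    · rw [hFmax p j hzM]
      have hc : e M j ∈ X M := he_mem M j (lt_of_lt_of_le hj (hXn M hMR))
      have hcA : e M j ∈ A := (Finset.mem_filter.1 hc).1
      exact ⟨Finset.add_mem_add (hBmem p hp).1 hcA,
        Finset.add_mem_add (hBmem p hp).2.1 ha₀A⟩
    · rw [hFne p j hzM]
      have hz : p.1 / p.2 ∈ R := Finset.mem_image.2 ⟨p, hp, rfl⟩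
      obtain ⟨hz'R, _, _⟩ := hsucc _ hz hzM
      have hc : e (succ (p.1 / p.2)) j ∈ X (succ (p.1 / p.2)) :=
        he_mem _ j (lt_of_lt_of_le hj (hXn _ hz'R))
      have hc' := Finset.mem_filter.1 hc
      exact ⟨Finset.add_mem_add (hBmem p hp).1 hc'.1,
        Finset.add_mem_add (hBmem p hp).2.1 hc'.2⟩
  -- conclude
  have hcard : B.card * n ≤ ((A + A) ×ˢ (A + A)).card := by
    have h := Finset.card_le_card_of_injOn F hmaps ?_
    · rwa [Finset.card_product, Finset.card_range] at h
    · rintro ⟨p, j⟩ hx ⟨q, j'⟩ hy hF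
      rw [Finset.mem_coe, Finset.mem_product] at hx hy
      obtain ⟨hp, hj⟩ := hx
      obtain ⟨hq, hj'⟩ := hy
      rw [Finset.mem_range] at hj hj'
      obtain ⟨h1, h2⟩ := hinj p hp j hj q hq j' hj' hF
      rw [h1, h2]
  calc n * B.card = B.card * n := mul_comm _ _
    _ ≤ ((A + A) ×ˢ (A + A)).card := hcard
    _ = (A + A).card ^ 2 := by rw [Finset.card_product, sq]
end

section
/- There exists a universal constant C > 0 such that for every finite set A of positive real numbers, |A+A| · |A/A| ≥ C · |A|^{5/2}. -/
open Finset Pointwise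

private noncomputable def Bs (A : Finset ℝ) (r : ℝ) : Finset ℝ :=
  A.filter (fun a => r * a ∈ A)

private lemma sum_Bs (A : Finset ℝ) (hA : ∀ a ∈ A, 0 < a) :
    ∑ r ∈ A / A, (Bs A r).card = A.card ^ 2 := by
  classical
  have h : (A ×ˢ A).card = ∑ r ∈ A / A,
      ((A ×ˢ A).filter (fun p => p.2 / p.1 = r)).card := by
    apply Finset.card_eq_sum_card_fiberwise
    intro p hp
    rw [Finset.mem_coe, Finset.mem_product] at hp
    exact Finset.div_mem_div hp.2 hp.1
  rw [Finset.card_product, ← sq] at h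
  rw [h]
  apply Finset.sum_congr rfl
  intro r hr
  apply Finset.card_nbij (fun a => (a, r * a))
  · intro a ha
    rw [Bs, Finset.mem_coe, Finset.mem_filter] at ha
    simp only [Finset.mem_coe, Finset.mem_filter, Finset.mem_product]
    refine ⟨⟨ha.1, ha.2⟩, ?_⟩
    field_simp [(hA a ha.1).ne']
  · intro a _ b _ h
    exact (Prod.mk.injEq _ _ _ _).mp h |>.1
  · intro p hp
    simp only [Finset.coe_filter, Finset.mem_product, Set.mem_setOf_eq, Finset.mem_coe] at hp
    obtain ⟨⟨h1, h2⟩, h3⟩ := hp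
    refine ⟨p.1, ?_, ?_⟩
    · rw [Bs, Finset.mem_coe, Finset.mem_filter]
      have : r * p.1 = p.2 := by
        rw [← h3]; field_simp [(hA _ h1).ne']
      exact ⟨h1, this ▸ h2⟩
    · have : r * p.1 = p.2 := by
        rw [← h3]; field_simp [(hA _ h1).ne']
      simp [this]


private lemma key_geom_s5 (A : Finset ℝ) (hA : ∀ a ∈ A, 0 < a) (S : Finset ℝ) :
    ∑ i ∈ Finset.range (S.card - 1),
      (Bs A ((S.sort (· ≤ ·)).getD i 0)).card *
        (Bs A ((S.sort (· ≤ ·)).getD (i + 1) 0)).card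
      ≤ (A + A).card ^ 2 := by
  classical
  set l := S.sort (· ≤ ·) with hl
  have hlen : l.length = S.card := Finset.length_sort _
  have hsorted : l.Pairwise (· < ·) := (Finset.sortedLT_sort S).pairwise
  have hmono : ∀ i j : ℕ, (hi : i < l.length) → (hj : j < l.length) → i < j →
      l[i] < l[j] := fun i j hi hj hij =>
    List.pairwise_iff_getElem.mp hsorted i j hi hj hij
  -- the chunk maps
  set T : ℕ → Finset (ℝ × ℝ) := fun i =>
    ((Bs A (l.getD i 0)) ×ˢ (Bs A (l.getD (i + 1) 0))).image
      (fun p => (p.1 + p.2, l.getD i 0 * p.1 + l.getD (i + 1) 0 * p.2)) with hT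
  have hBpos : ∀ r : ℝ, ∀ a ∈ Bs A r, 0 < a ∧ a ∈ A ∧ r * a ∈ A := by
    intro r a ha
    rw [Bs, Finset.mem_filter] at ha
    exact ⟨hA a ha.1, ha.1, ha.2⟩
  -- sandwich property
  have hsand : ∀ i ∈ Finset.range (S.card - 1), ∀ q ∈ T i,
      0 < q.1 ∧ l.getD i 0 * q.1 < q.2 ∧ q.2 < l.getD (i + 1) 0 * q.1 := by
    intro i hi q hq
    rw [Finset.mem_range] at hi
    have hi1 : i < l.length := by omega
    have hi2 : i + 1 < l.length := by omega
    have hst : l.getD i 0 < l.getD (i + 1) 0 := by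
      rw [List.getD_eq_getElem l 0 hi1, List.getD_eq_getElem l 0 hi2]
      exact hmono i (i + 1) hi1 hi2 (by omega)
    rw [hT] at hq
    simp only [Finset.mem_image, Finset.mem_product] at hq
    obtain ⟨p, ⟨hp1, hp2⟩, rfl⟩ := hq
    obtain ⟨ha, _, _⟩ := hBpos _ _ hp1
    obtain ⟨hb, _, _⟩ := hBpos _ _ hp2
    refine ⟨by positivity, ?_, ?_⟩
    · simp only
      rw [mul_add]
      have := mul_lt_mul_of_pos_right hst hb
      nlinarith
    · simp only
      rw [mul_add]
      have := mul_lt_mul_of_pos_right hst ha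
      nlinarith
  -- cardinality of chunks
  have hcard : ∀ i ∈ Finset.range (S.card - 1),
      (T i).card = (Bs A (l.getD i 0)).card * (Bs A (l.getD (i + 1) 0)).card := by
    intro i hi
    rw [Finset.mem_range] at hi
    have hi1 : i < l.length := by omega
    have hi2 : i + 1 < l.length := by omega
    have hst : l.getD i 0 < l.getD (i + 1) 0 := by
      rw [List.getD_eq_getElem l 0 hi1, List.getD_eq_getElem l 0 hi2]
      exact hmono i (i + 1) hi1 hi2 (by omega)
    rw [hT]
    simp only
    rw [Finset.card_image_of_injOn, Finset.card_product]
    intro p hp q hq hpq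
    simp only [Finset.coe_product, Set.mem_prod, Finset.mem_coe] at hp hq
    have h1 : p.1 + p.2 = q.1 + q.2 := congrArg Prod.fst hpq
    have h2 : l.getD i 0 * p.1 + l.getD (i + 1) 0 * p.2
        = l.getD i 0 * q.1 + l.getD (i + 1) 0 * q.2 := congrArg Prod.snd hpq
    have hne : l.getD i 0 ≠ l.getD (i + 1) 0 := ne_of_lt hst
    have hp2q2 : p.2 = q.2 := by
      have : (l.getD (i + 1) 0 - l.getD i 0) * p.2
          = (l.getD (i + 1) 0 - l.getD i 0) * q.2 := by
        linear_combination h2 - l.getD i 0 * h1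
      exact mul_left_cancel₀ (sub_ne_zero.mpr hne.symm) this
    have : p.1 = q.1 := by linarith
    exact Prod.ext this hp2q2
  -- chunks within (A+A) ×ˢ (A+A)
  have hsub : ∀ i ∈ Finset.range (S.card - 1), T i ⊆ (A + A) ×ˢ (A + A) := by
    intro i _ q hq
    rw [hT] at hq
    simp only [Finset.mem_image, Finset.mem_product] at hq ⊢
    obtain ⟨p, ⟨hp1, hp2⟩, rfl⟩ := hq
    obtain ⟨_, ha1, ha2⟩ := hBpos _ _ hp1
    obtain ⟨_, hb1, hb2⟩ := hBpos _ _ hp2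
    exact ⟨Finset.add_mem_add ha1 hb1, Finset.add_mem_add ha2 hb2⟩
  -- disjointness
  have hdisj : ∀ i ∈ Finset.range (S.card - 1), ∀ j ∈ Finset.range (S.card - 1),
      i ≠ j → Disjoint (T i) (T j) := by
    have main : ∀ i ∈ Finset.range (S.card - 1), ∀ j ∈ Finset.range (S.card - 1),
        i < j → Disjoint (T i) (T j) := by
      intro i hi j hj hij
      rw [Finset.disjoint_left]
      intro q hqi hqj
      obtain ⟨hx, _, h2⟩ := hsand i hi q hqi
      obtain ⟨_, h3, _⟩ := hsand j hj q hqj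
      rw [Finset.mem_range] at hi hj
      have hi2 : i + 1 < l.length := by omega
      have hj1 : j < l.length := by omega
      have hle : l.getD (i + 1) 0 ≤ l.getD j 0 := by
        rw [List.getD_eq_getElem l 0 hi2, List.getD_eq_getElem l 0 hj1]
        rcases eq_or_lt_of_le (Nat.succ_le_of_lt hij) with h | h
        · subst h; exact le_rfl
        · exact le_of_lt (hmono _ _ hi2 hj1 h)
      have := mul_le_mul_of_nonneg_right hle (le_of_lt hx)
      linarith
    intro i hi j hj hij
    rcases lt_or_gt_of_ne hij with h | h
    · exact main i hi j hj h
    · exact (main j hj i hi h).symm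
  calc ∑ i ∈ Finset.range (S.card - 1),
        (Bs A (l.getD i 0)).card * (Bs A (l.getD (i + 1) 0)).card
      = ∑ i ∈ Finset.range (S.card - 1), (T i).card :=
        (Finset.sum_congr rfl hcard).symm
    _ = ((Finset.range (S.card - 1)).biUnion T).card :=
        (Finset.card_biUnion hdisj).symm
    _ ≤ ((A + A) ×ˢ (A + A)).card := by
        apply Finset.card_le_card
        intro q hq
        rw [Finset.mem_biUnion] at hq
        obtain ⟨i, hi, hqi⟩ := hq
        exact hsub i hi hqi
    _ = (A + A).card ^ 2 := by rw [Finset.card_product, sq]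


-- trivial bounds
private lemma trivA (A : Finset ℝ) (hA : ∀ a ∈ A, 0 < a) : A.card ≤ (A + A).card := by
  apply Finset.card_le_card_of_injOn (fun a => a + a)
  · intro a ha; exact Finset.add_mem_add ha ha
  · intro a _ b _ h; dsimp at h; linarith

private lemma trivM (A : Finset ℝ) (hA : ∀ a ∈ A, 0 < a) (hne : A.Nonempty) :
    A.card ≤ (A / A).card := by
  obtain ⟨a0, ha0⟩ := hne
  apply Finset.card_le_card_of_injOn (fun a => a / a0)
  · intro a ha; exact Finset.div_mem_div ha ha0
  · intro a _ b _ h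
    dsimp at h
    have h0 : a0 ≠ 0 := ne_of_gt (hA a0 ha0)
    field_simp at h
    exact h

private lemma main_nat (A : Finset ℝ) (hA : ∀ a ∈ A, 0 < a) :
    (A.card : ℝ) ^ 5 ≤ (4 * ((A + A).card * (A / A).card)) ^ 2 := by
  classical
  set n := A.card with hn
  set m := (A / A).card with hm
  set K := (A + A).card with hK
  rcases Nat.eq_zero_or_pos n with h0 | hpos
  · rw [h0]; norm_num; positivity
  have hne : A.Nonempty := Finset.card_pos.mp hpos
  by_cases hsmall : n ≤ 16
  · -- trivial case
    have h1 : (n : ℝ) ≤ K := by exact_mod_cast trivA A hA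
    have h2 : (n : ℝ) ≤ m := by exact_mod_cast trivM A hA hne
    have hn0 : (0:ℝ) ≤ n := Nat.cast_nonneg n
    have h16 : (n : ℝ) ≤ 16 := by exact_mod_cast hsmall
    calc (n:ℝ)^5 = (n:ℝ) * ((n:ℝ)^2)^2 := by ring
      _ ≤ 16 * ((n:ℝ)*(n:ℝ))^2 := by
          apply mul_le_mul h16 (by apply pow_le_pow_left₀ (by positivity); nlinarith) (by positivity) (by norm_num)
      _ ≤ 16 * ((K:ℝ)*(m:ℝ))^2 := by
          have : (n:ℝ)*(n:ℝ) ≤ (K:ℝ)*(m:ℝ) :=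
            mul_le_mul h1 h2 hn0 (Nat.cast_nonneg K)
          have h0' : (0:ℝ) ≤ (n:ℝ)*(n:ℝ) := by positivity
          nlinarith
      _ = (4 * ((K:ℝ) * (m:ℝ)))^2 := by ring
  · push_neg at hsmall
    have hn4 : 4 ≤ n := by omega
    have hmpos : 0 < m := by
      rw [hm]; exact Finset.card_pos.mpr (hne.div hne)
    -- popular slopes
    set S := (A / A).filter (fun r => (n : ℝ)^2 ≤ 2 * m * ((Bs A r).card : ℝ)) with hS
    set k := S.card with hk
    -- sum over complement is small
    have hsplit : (n:ℝ)^2 = (∑ r ∈ S, ((Bs A r).card : ℝ))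
        + ∑ r ∈ (A/A).filter (fun r => ¬ ((n : ℝ)^2 ≤ 2 * m * ((Bs A r).card : ℝ))), ((Bs A r).card : ℝ) := by
      rw [hS, Finset.sum_filter_add_sum_filter_not]
      rw [← Nat.cast_sum]
      rw [sum_Bs A hA]
      push_cast
      rfl
    have hcomp : ∑ r ∈ (A/A).filter (fun r => ¬ ((n : ℝ)^2 ≤ 2 * m * ((Bs A r).card : ℝ))),
        ((Bs A r).card : ℝ) ≤ (n:ℝ)^2 / 2 := by
      have hcard : ((A/A).filter (fun r => ¬ ((n : ℝ)^2 ≤ 2 * m * ((Bs A r).card : ℝ)))).card ≤ m :=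
        le_trans (Finset.card_filter_le _ _) le_rfl
      calc ∑ r ∈ (A/A).filter (fun r => ¬ ((n : ℝ)^2 ≤ 2 * m * ((Bs A r).card : ℝ))), ((Bs A r).card : ℝ)
          ≤ ∑ _r ∈ (A/A).filter (fun r => ¬ ((n : ℝ)^2 ≤ 2 * m * ((Bs A r).card : ℝ))), (n:ℝ)^2/(2*m) := by
            apply Finset.sum_le_sum
            intro r hr
            rw [Finset.mem_filter] at hr
            rw [le_div_iff₀ (by have : (0:ℝ) < m := by exact_mod_cast hmpos
                                linarith)]
            nlinarith [hr.2, le_of_not_ge hr.2]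
        _ = ((A/A).filter (fun r => ¬ ((n : ℝ)^2 ≤ 2 * m * ((Bs A r).card : ℝ)))).card * ((n:ℝ)^2/(2*m)) := by
            rw [Finset.sum_const, nsmul_eq_mul]
        _ ≤ (m:ℝ) * ((n:ℝ)^2/(2*m)) := by
            apply mul_le_mul_of_nonneg_right (by exact_mod_cast hcard) (by exact div_nonneg (sq_nonneg _) (by have : (0:ℝ) ≤ m := Nat.cast_nonneg m; linarith))
        _ = (n:ℝ)^2/2 := by field_simp
    have hSsum : (n:ℝ)^2 / 2 ≤ ∑ r ∈ S, ((Bs A r).card : ℝ) := by linarith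
    -- k is large
    have hkn : (n:ℝ) ≤ 2 * k := by
      have hub : ∑ r ∈ S, ((Bs A r).card : ℝ) ≤ (k:ℝ) * n := by
        calc ∑ r ∈ S, ((Bs A r).card : ℝ) ≤ ∑ _r ∈ S, (n:ℝ) := by
              apply Finset.sum_le_sum
              intro r _
              have : (Bs A r).card ≤ n := Finset.card_filter_le _ _
              exact_mod_cast this
          _ = (k:ℝ) * n := by rw [Finset.sum_const, nsmul_eq_mul]
      have hnpos : (0:ℝ) < n := by exact_mod_cast hpos
      nlinarith
    -- apply key geometric lemma
    have hgeo := key_geom_s5 A hA S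
    have hterm : ∀ i ∈ Finset.range (k - 1),
        ((n:ℝ)^2/(2*m))^2 ≤ ((Bs A ((S.sort (· ≤ ·)).getD i 0)).card *
          (Bs A ((S.sort (· ≤ ·)).getD (i + 1) 0)).card : ℕ) := by
      intro i hi
      rw [Finset.mem_range] at hi
      have hlen : (S.sort (· ≤ ·)).length = k := Finset.length_sort _
      have hmem : ∀ j : ℕ, j < k → (S.sort (· ≤ ·)).getD j 0 ∈ S := by
        intro j hj
        have hj' : j < (S.sort (· ≤ ·)).length := by omega
        rw [List.getD_eq_getElem _ 0 hj']
        rw [← Finset.mem_sort (α := ℝ) (· ≤ ·)]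
        exact List.getElem_mem hj'
      have h1 := hmem i (by omega)
      have h2 := hmem (i+1) (by omega)
      rw [hS, Finset.mem_filter] at h1 h2
      have e1 : (n:ℝ)^2/(2*m) ≤ ((Bs A ((S.sort (· ≤ ·)).getD i 0)).card : ℝ) := by
        rw [div_le_iff₀ (by have : (0:ℝ) < m := by exact_mod_cast hmpos
                            linarith)]
        nlinarith [h1.2]
      have e2 : (n:ℝ)^2/(2*m) ≤ ((Bs A ((S.sort (· ≤ ·)).getD (i+1) 0)).card : ℝ) := by
        rw [div_le_iff₀ (by have : (0:ℝ) < m := by exact_mod_cast hmpos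
                            linarith)]
        nlinarith [h2.2]
      push_cast
      have hp : (0:ℝ) ≤ (n:ℝ)^2/(2*m) := by exact div_nonneg (sq_nonneg _) (by have : (0:ℝ) ≤ m := Nat.cast_nonneg m; linarith)
      calc ((n:ℝ)^2/(2*m))^2 = ((n:ℝ)^2/(2*m)) * ((n:ℝ)^2/(2*m)) := sq ((n:ℝ)^2/(2*m))
        _ ≤ _ := mul_le_mul e1 e2 hp (le_trans hp e1)
    have hk1 : 2 ≤ k := by
      have : (4:ℝ) ≤ (n:ℝ) := by exact_mod_cast hn4
      by_contra hc
      push_neg at hc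
      interval_cases k <;> norm_num at hkn <;> linarith
    have hsum : ((k:ℝ) - 1) * ((n:ℝ)^2/(2*m))^2 ≤ (K:ℝ)^2 := by
      have c1 : (Finset.range (k-1)).card • (((n:ℝ)^2/(2*m))^2)
          ≤ ∑ i ∈ Finset.range (k - 1), (((Bs A ((S.sort (· ≤ ·)).getD i 0)).card *
            (Bs A ((S.sort (· ≤ ·)).getD (i + 1) 0)).card : ℕ) : ℝ) :=
        Finset.card_nsmul_le_sum _ _ _ hterm
      rw [Finset.card_range, nsmul_eq_mul] at c1
      have c2 : (∑ i ∈ Finset.range (k - 1), (((Bs A ((S.sort (· ≤ ·)).getD i 0)).card *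
            (Bs A ((S.sort (· ≤ ·)).getD (i + 1) 0)).card : ℕ) : ℝ)) ≤ ((K:ℝ))^2 := by
        rw [← Nat.cast_sum]
        exact_mod_cast hgeo
      have ck : (((k-1 : ℕ)):ℝ) = (k:ℝ) - 1 := by
        rw [Nat.cast_sub (by omega)]
        norm_num
      rw [ck] at c1
      linarith
    -- final arithmetic
    have hmR : (0:ℝ) < (m:ℝ) := by exact_mod_cast hmpos
    have hnR : (4:ℝ) ≤ (n:ℝ) := by exact_mod_cast hn4
    have hq : (n:ℝ)/4 ≤ (k:ℝ) - 1 := by linarith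
    have e : ((n:ℝ)^2/(2*m))^2 = (n:ℝ)^4/(4*(m:ℝ)^2) := by
      field_simp
      ring
    rw [e] at hsum
    have hsum' : ((k:ℝ) - 1) * (n:ℝ)^4 ≤ 4*(m:ℝ)^2*(K:ℝ)^2 := by
      have h4m : (0:ℝ) < 4*(m:ℝ)^2 := by have := pow_pos hmR 2; linarith
      rw [div_eq_mul_inv] at hsum
      have := mul_le_mul_of_nonneg_right hsum (le_of_lt h4m)
      calc ((k:ℝ) - 1) * (n:ℝ)^4 = ((k:ℝ) - 1) * ((n:ℝ)^4 * (4*(m:ℝ)^2)⁻¹) * (4*(m:ℝ)^2) := by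
            field_simp
        _ ≤ (K:ℝ)^2 * (4*(m:ℝ)^2) := this
        _ = 4*(m:ℝ)^2*(K:ℝ)^2 := by ring
    have hq4 : (n:ℝ)/4 * (n:ℝ)^4 ≤ ((k:ℝ) - 1) * (n:ℝ)^4 := by
      apply mul_le_mul_of_nonneg_right hq (by exact pow_nonneg (Nat.cast_nonneg n) 4)
    calc (n:ℝ)^5 = 4 * ((n:ℝ)/4 * (n:ℝ)^4) := by ring
      _ ≤ 4 * (4*(m:ℝ)^2*(K:ℝ)^2) := by linarith
      _ = (4 * ((K:ℝ) * (m:ℝ)))^2 := by ring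

theorem sum_division_five_halves :
    ∃ C : ℝ, C > 0 ∧ ∀ A : Finset ℝ, (∀ a ∈ A, 0 < a) →
      ((A + A).card : ℝ) * ((A / A).card : ℝ) ≥ C * (A.card : ℝ) ^ ((5 : ℝ) / 2) := by
  refine ⟨1/4, by norm_num, ?_⟩
  intro A hA
  have h := main_nat A hA
  have hrw : (A.card : ℝ) ^ ((5 : ℝ) / 2) = Real.sqrt ((A.card : ℝ)^5) := by
    rw [show ((5:ℝ)/2) = (5:ℝ) * (1/2) by norm_num,
      Real.rpow_mul (Nat.cast_nonneg _), ← Real.sqrt_eq_rpow]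
    rw [show ((5:ℝ)) = ((5:ℕ):ℝ) by norm_num, Real.rpow_natCast]
  rw [ge_iff_le, hrw]
  have h4 : (0:ℝ) ≤ 4 * (((A + A).card : ℝ) * ((A / A).card : ℝ)) := by positivity
  calc (1/4) * Real.sqrt ((A.card : ℝ)^5)
      ≤ (1/4) * Real.sqrt ((4 * (((A + A).card : ℝ) * ((A / A).card : ℝ)))^2) := by
        have := Real.sqrt_le_sqrt h
        linarith
    _ = (1/4) * (4 * (((A + A).card : ℝ) * ((A / A).card : ℝ))) := by
        rw [Real.sqrt_sq h4]
    _ = ((A + A).card : ℝ) * ((A / A).card : ℝ) := by ring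
end

section
/- Let A be a finite set of positive real numbers with |A| ≥ 2. Then |A+A|^2 · |A/A| ≥ |A|^4 / (4⌈log₂ |A|⌉). -/
open Finset Pointwise
open scoped Classical

namespace SolymosiAux

/-- Points of `A ×ˢ A` lying on the line of slope-parameter `l` (i.e. `fst = l * snd`). -/
noncomputable def P (A : Finset ℝ) (l : ℝ) : Finset (ℝ × ℝ) :=
  (A ×ˢ A).filter (fun p => p.1 = l * p.2)

noncomputable def r (A : Finset ℝ) (l : ℝ) : ℕ := (P A l).card

lemma mem_P {A : Finset ℝ} {l : ℝ} {p : ℝ × ℝ} :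
    p ∈ P A l ↔ p.1 ∈ A ∧ p.2 ∈ A ∧ p.1 = l * p.2 := by
  simp [P, Finset.mem_filter, Finset.mem_product, and_assoc]

lemma r_pos {A : Finset ℝ} (hA : ∀ a ∈ A, 0 < a) {l : ℝ} (hl : l ∈ A / A) :
    1 ≤ r A l := by
  rw [Finset.mem_div] at hl
  obtain ⟨a, ha, b, hb, hab⟩ := hl
  have hb0 : b ≠ 0 := ne_of_gt (hA b hb)
  have : (a, b) ∈ P A l := mem_P.2 ⟨ha, hb, by rw [← hab, div_mul_cancel₀ a hb0]⟩
  exact Finset.card_pos.2 ⟨_, this⟩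

lemma r_le (A : Finset ℝ) (l : ℝ) : r A l ≤ A.card := by
  apply Finset.card_le_card_of_injOn Prod.snd
  · intro p hp; exact (mem_P.1 hp).2.1
  · intro p hp q hq h
    have hp' := (mem_P.1 hp).2.2
    have hq' := (mem_P.1 hq).2.2
    exact Prod.ext (by rw [hp', hq', h]) h

lemma sum_r {A : Finset ℝ} (hA : ∀ a ∈ A, 0 < a) :
    ∑ l ∈ A / A, r A l = A.card ^ 2 := by
  have h : ∀ p ∈ A ×ˢ A, (fun p : ℝ × ℝ => p.1 / p.2) p ∈ A / A := by
    intro p hp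
    rw [Finset.mem_product] at hp
    exact Finset.div_mem_div hp.1 hp.2
  have := Finset.card_eq_sum_card_fiberwise h
  rw [Finset.card_product, ← sq] at this
  rw [this]
  apply Finset.sum_congr rfl
  intro l _
  rw [r]
  congr 1
  ext p
  simp only [P, Finset.mem_filter, Finset.mem_product]
  constructor
  · rintro ⟨⟨h1, h2⟩, h3⟩
    refine ⟨⟨h1, h2⟩, ?_⟩
    have : p.2 ≠ 0 := ne_of_gt (hA _ h2)
    field_simp [h3]
    linarith [h3, mul_comm p.2 l]
  · rintro ⟨⟨h1, h2⟩, h3⟩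
    refine ⟨⟨h1, h2⟩, ?_⟩
    have : p.2 ≠ 0 := ne_of_gt (hA _ h2)
    field_simp at h3
    linarith [h3]

/-- The sums of points on line `l` with points on line `m`. -/
noncomputable def img (A : Finset ℝ) (l m : ℝ) : Finset (ℝ × ℝ) :=
  ((P A l) ×ˢ (P A m)).image (fun z => (z.1.1 + z.2.1, z.1.2 + z.2.2))

lemma card_img {A : Finset ℝ} {l m : ℝ} (hlm : l ≠ m) :
    (img A l m).card = r A l * r A m := by
  have hinj : Set.InjOn (fun z : (ℝ × ℝ) × (ℝ × ℝ) => (z.1.1 + z.2.1, z.1.2 + z.2.2))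
      ((P A l) ×ˢ (P A m) : Finset _) := by
    rintro ⟨p, q⟩ hz ⟨p', q'⟩ hw h
    simp only [Finset.coe_product, Set.mem_prod, Finset.mem_coe] at hz hw
    obtain ⟨hp, hq⟩ := hz
    obtain ⟨hp', hq'⟩ := hw
    have e1 : p.1 = l * p.2 := (mem_P.1 hp).2.2
    have e2 : q.1 = m * q.2 := (mem_P.1 hq).2.2
    have e3 : p'.1 = l * p'.2 := (mem_P.1 hp').2.2
    have e4 : q'.1 = m * q'.2 := (mem_P.1 hq').2.2
    have h1 : p.1 + q.1 = p'.1 + q'.1 := congrArg Prod.fst h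
    have h2 : p.2 + q.2 = p'.2 + q'.2 := congrArg Prod.snd h
    have hq2 : q.2 = q'.2 := by
      have hz : (m - l) * (q.2 - q'.2) = 0 := by
        linear_combination h1 - e1 - e2 + e3 + e4 - l * h2
      rcases mul_eq_zero.1 hz with h' | h'
      · exact absurd (by linarith : l = m) hlm
      · linarith
    have hp2 : p.2 = p'.2 := by linarith
    have hqq : q = q' := Prod.ext (by rw [e2, e4, hq2]) hq2
    have hpp : p = p' := Prod.ext (by rw [e1, e3, hp2]) hp2
    exact Prod.ext (by simp_all) (by simp_all)
  rw [img, Finset.card_image_of_injOn hinj, Finset.card_product]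
  rfl

lemma img_subset (A : Finset ℝ) (l m : ℝ) :
    img A l m ⊆ (A + A) ×ˢ (A + A) := by
  intro x hx
  simp only [img, Finset.mem_image, Finset.mem_product] at hx
  obtain ⟨⟨p, q⟩, ⟨hp, hq⟩, hx⟩ := hx
  obtain ⟨hp1, hp2, -⟩ := mem_P.1 hp
  obtain ⟨hq1, hq2, -⟩ := mem_P.1 hq
  subst hx
  exact Finset.mem_product.2 ⟨Finset.add_mem_add hp1 hq1, Finset.add_mem_add hp2 hq2⟩

lemma slope_mem_img {A : Finset ℝ} (hA : ∀ a ∈ A, 0 < a) {l m : ℝ} (hlm : l < m)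
    {x : ℝ × ℝ} (hx : x ∈ img A l m) :
    0 < x.2 ∧ l * x.2 < x.1 ∧ x.1 < m * x.2 := by
  simp only [img, Finset.mem_image, Finset.mem_product] at hx
  obtain ⟨⟨p, q⟩, ⟨hp, hq⟩, hx⟩ := hx
  obtain ⟨-, hp2, ep⟩ := mem_P.1 hp
  obtain ⟨-, hq2, eq⟩ := mem_P.1 hq
  have hbp : 0 < p.2 := hA _ hp2
  have hbq : 0 < q.2 := hA _ hq2
  subst hx
  refine ⟨by positivity, ?_, ?_⟩ <;> simp only [ep, eq] <;> nlinarith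

/-- The next element of `S` after `l`. -/
noncomputable def nxt (S : Finset ℝ) (l : ℝ) : ℝ :=
  if h : (S.filter (fun x => l < x)).Nonempty then (S.filter (fun x => l < x)).min' h else l

section nxt

variable {S : Finset ℝ} {l : ℝ} (hS : S.Nonempty)

lemma filter_ne (hl : l ∈ S.erase (S.max' hS)) : (S.filter (fun x => l < x)).Nonempty := by
  refine ⟨S.max' hS, Finset.mem_filter.2 ⟨S.max'_mem hS, ?_⟩⟩
  exact lt_of_le_of_ne (S.le_max' l (Finset.mem_of_mem_erase hl)) (Finset.ne_of_mem_erase hl)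

lemma nxt_mem (hl : l ∈ S.erase (S.max' hS)) : nxt S l ∈ S := by
  rw [nxt, dif_pos (filter_ne hS hl)]
  exact Finset.mem_of_mem_filter _ (Finset.min'_mem _ _)

lemma lt_nxt (hl : l ∈ S.erase (S.max' hS)) : l < nxt S l := by
  rw [nxt, dif_pos (filter_ne hS hl)]
  exact (Finset.mem_filter.1 (Finset.min'_mem _ _)).2

lemma nxt_le (hl : l ∈ S.erase (S.max' hS)) {m : ℝ} (hm : m ∈ S) (hlm : l < m) :
    nxt S l ≤ m := by
  rw [nxt, dif_pos (filter_ne hS hl)]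
  exact Finset.min'_le _ _ (Finset.mem_filter.2 ⟨hm, hlm⟩)

end nxt

/-- Solymosi's key geometric estimate: sums of consecutive-slope products. -/
lemma consec_sum {A : Finset ℝ} (hA : ∀ a ∈ A, 0 < a) {S : Finset ℝ} (hS : S.Nonempty) :
    ∑ l ∈ S.erase (S.max' hS), r A l * r A (nxt S l) ≤ (A + A).card ^ 2 := by
  set T := S.erase (S.max' hS) with hT
  have hdisj : ∀ l ∈ T, ∀ m ∈ T, l ≠ m → Disjoint (img A l (nxt S l)) (img A m (nxt S m)) := by
    intro l hl m hm hlm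
    rw [Finset.disjoint_left]
    intro x hxl hxm
    obtain ⟨hx2, hll, hlr⟩ := slope_mem_img hA (lt_nxt hS hl) hxl
    obtain ⟨-, hml, hmr⟩ := slope_mem_img hA (lt_nxt hS hm) hxm
    rcases lt_or_gt_of_ne hlm with h | h
    · have := nxt_le hS hl (Finset.mem_of_mem_erase hm) h
      nlinarith
    · have := nxt_le hS hm (Finset.mem_of_mem_erase hl) h
      nlinarith
  calc ∑ l ∈ T, r A l * r A (nxt S l)
      = ∑ l ∈ T, (img A l (nxt S l)).card := by
        refine Finset.sum_congr rfl fun l hl => ?_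
        exact (card_img (ne_of_lt (lt_nxt hS hl))).symm
    _ = (T.biUnion (fun l => img A l (nxt S l))).card := (Finset.card_biUnion hdisj).symm
    _ ≤ ((A + A) ×ˢ (A + A)).card := by
        apply Finset.card_le_card
        intro x hx
        obtain ⟨l, hl, hxl⟩ := Finset.mem_biUnion.1 hx
        exact img_subset A l (nxt S l) hxl
    _ = (A + A).card ^ 2 := by rw [Finset.card_product, sq]

/-- Per dyadic class estimate. -/
lemma class_sum {A : Finset ℝ} (hA : ∀ a ∈ A, 0 < a) {S : Finset ℝ}
    (hbal : ∀ l ∈ S, ∀ m ∈ S, r A l ≤ 2 * r A m) :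
    ∑ l ∈ S, (r A l) ^ 2 ≤ 3 * (A + A).card ^ 2 := by
  rcases S.eq_empty_or_nonempty with rfl | hS
  · simp
  have hmax : S.max' hS ∈ S := S.max'_mem hS
  have hnm : A.card ≤ (A + A).card := Finset.card_le_card_add_self
  have h1 : r A (S.max' hS) ^ 2 ≤ (A + A).card ^ 2 :=
    Nat.pow_le_pow_left (le_trans (r_le A _) hnm) 2
  have h2 : ∑ l ∈ S.erase (S.max' hS), (r A l) ^ 2
      ≤ 2 * ∑ l ∈ S.erase (S.max' hS), r A l * r A (nxt S l) := by
    rw [Finset.mul_sum]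
    refine Finset.sum_le_sum fun l hl => ?_
    have hln := nxt_mem hS hl
    have := hbal l (Finset.mem_of_mem_erase hl) (nxt S l) hln
    calc (r A l) ^ 2 = r A l * r A l := sq (r A l) ▸ rfl
      _ ≤ r A l * (2 * r A (nxt S l)) := Nat.mul_le_mul_left _ this
      _ = 2 * (r A l * r A (nxt S l)) := by ring
  calc ∑ l ∈ S, (r A l) ^ 2
      = ∑ l ∈ S.erase (S.max' hS), (r A l) ^ 2 + r A (S.max' hS) ^ 2 :=
        (Finset.sum_erase_add S _ hmax).symm
    _ ≤ 2 * ∑ l ∈ S.erase (S.max' hS), r A l * r A (nxt S l) + (A + A).card ^ 2 := by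
        exact Nat.add_le_add h2 h1
    _ ≤ 2 * (A + A).card ^ 2 + (A + A).card ^ 2 := by
        exact Nat.add_le_add_right (Nat.mul_le_mul_left 2 (consec_sum hA hS)) _
    _ = 3 * (A + A).card ^ 2 := by ring



/-- The dyadic decomposition: total second–moment bound. -/
lemma total_sum {A : Finset ℝ} (hA : ∀ a ∈ A, 0 < a) {K : ℕ} (hK : 1 ≤ K)
    (hn : A.card ≤ 2 ^ K) :
    ∑ l ∈ A / A, (r A l) ^ 2 ≤ K * (3 * (A + A).card ^ 2) := by
  have hmaps : ∀ l ∈ A / A, min (Nat.log 2 (r A l)) (K - 1) ∈ Finset.range K :=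
    fun l _ => Finset.mem_range.2 (lt_of_le_of_lt (min_le_right _ _) (Nat.sub_lt hK one_pos))
  rw [← Finset.sum_fiberwise_of_maps_to hmaps]
  calc ∑ k ∈ Finset.range K,
        ∑ l ∈ (A / A).filter (fun l => min (Nat.log 2 (r A l)) (K - 1) = k), (r A l) ^ 2
      ≤ ∑ _k ∈ Finset.range K, 3 * (A + A).card ^ 2 := by
        refine Finset.sum_le_sum fun k _ => ?_
        apply class_sum hA
        intro l hl m hm
        rw [Finset.mem_filter] at hl hm
        have hm1 : 2 ^ k ≤ r A m := by
          have hk : k ≤ Nat.log 2 (r A m) := hm.2 ▸ min_le_left _ _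
          calc 2 ^ k ≤ 2 ^ Nat.log 2 (r A m) := Nat.pow_le_pow_right (by norm_num) hk
            _ ≤ r A m := Nat.pow_log_le_self 2 (Nat.one_le_iff_ne_zero.1 (r_pos hA hm.1))
        have hl1 : r A l ≤ 2 * 2 ^ k := by
          rcases le_or_gt (Nat.log 2 (r A l)) (K - 1) with h | h
          · have hk : k = Nat.log 2 (r A l) := by rw [← hl.2, min_eq_left h]
            have := Nat.lt_pow_succ_log_self (b := 2) (by norm_num) (r A l)
            calc r A l ≤ 2 ^ (Nat.log 2 (r A l) + 1) - 1 := Nat.le_sub_one_of_lt this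
              _ ≤ 2 ^ (k + 1) := by rw [hk]; omega
              _ = 2 * 2 ^ k := by rw [pow_succ]; ring
          · have hk : k = K - 1 := by rw [← hl.2, min_eq_right (le_of_lt h)]
            calc r A l ≤ A.card := r_le A l
              _ ≤ 2 ^ K := hn
              _ = 2 * 2 ^ (K - 1) := by
                  rw [← pow_succ']; congr 1; omega
              _ = 2 * 2 ^ k := by rw [hk]
        calc r A l ≤ 2 * 2 ^ k := hl1
          _ ≤ 2 * r A m := Nat.mul_le_mul_left 2 hm1
    _ = K * (3 * (A + A).card ^ 2) := by
        rw [Finset.sum_const, Finset.card_range, smul_eq_mul]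

end SolymosiAux

open SolymosiAux in
theorem sum_division_log_estimate (A : Finset ℝ) (hA : ∀ a ∈ A, 0 < a) (hcard : 2 ≤ A.card) :
    ((A + A).card : ℝ) ^ 2 * ((A / A).card : ℝ)
      ≥ (A.card : ℝ) ^ 4 / (4 * (⌈Real.logb 2 (A.card : ℝ)⌉ : ℝ)) := by
  have hn2 : (2 : ℝ) ≤ (A.card : ℝ) := by exact_mod_cast hcard
  have hlogb : (1 : ℝ) ≤ Real.logb 2 (A.card : ℝ) := by
    have := (Real.logb_le_logb (b := 2) (by norm_num) (by norm_num : (0:ℝ) < 2)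
      (by linarith : (0:ℝ) < (A.card : ℝ))).2 hn2
    simpa using this
  have hceil1 : (1 : ℝ) ≤ (⌈Real.logb 2 (A.card : ℝ)⌉ : ℝ) :=
    le_trans hlogb (Int.le_ceil _)
  set c : ℤ := ⌈Real.logb 2 (A.card : ℝ)⌉ with hc
  set K : ℕ := c.toNat with hKdef
  have hc0 : (0 : ℝ) ≤ (c : ℝ) := le_trans zero_le_one hceil1
  have hc0' : (0 : ℤ) ≤ c := by exact_mod_cast hc0
  have hcK : (K : ℝ) = (c : ℝ) := by
    rw [hKdef]
    have := Int.toNat_of_nonneg hc0'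
    exact_mod_cast congrArg (fun z : ℤ => (z : ℝ)) this
  have hK1 : 1 ≤ K := by
    have : (1 : ℝ) ≤ (K : ℝ) := hcK ▸ hceil1
    exact_mod_cast this
  have hn2K : A.card ≤ 2 ^ K := by
    have h1 : (A.card : ℝ) ≤ (2 : ℝ) ^ (K : ℝ) := by
      have hl : Real.logb 2 (A.card : ℝ) ≤ (K : ℝ) := hcK ▸ Int.le_ceil _
      calc (A.card : ℝ) = (2 : ℝ) ^ Real.logb 2 (A.card : ℝ) :=
            (Real.rpow_logb (by norm_num) (by norm_num) (by linarith)).symm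
        _ ≤ (2 : ℝ) ^ (K : ℝ) := by
            exact (Real.rpow_le_rpow_left_iff (by norm_num)).2 hl
    rw [Real.rpow_natCast] at h1
    exact_mod_cast h1
  -- Cauchy–Schwarz
  have hsum : ∑ l ∈ A / A, ((r A l : ℝ)) = (A.card : ℝ) ^ 2 := by
    exact_mod_cast congrArg (Nat.cast (R := ℝ)) (sum_r hA)
  have hCS : ((A.card : ℝ) ^ 2) ^ 2
      ≤ ((A / A).card : ℝ) * ∑ l ∈ A / A, (r A l : ℝ) ^ 2 := by
    have := sq_sum_le_card_mul_sum_sq (s := A / A) (f := fun l => (r A l : ℝ))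
    rwa [hsum] at this
  have htot : (∑ l ∈ A / A, (r A l : ℝ) ^ 2) ≤ (K : ℝ) * (3 * ((A + A).card : ℝ) ^ 2) := by
    exact_mod_cast total_sum hA hK1 hn2K
  have hq0 : (0 : ℝ) ≤ ((A / A).card : ℝ) := by positivity
  have hfin : (A.card : ℝ) ^ 4 ≤ ((A + A).card : ℝ) ^ 2 * ((A / A).card : ℝ) * (4 * (c : ℝ)) := by
    have h2 : ((A.card : ℝ) ^ 2) ^ 2 = (A.card : ℝ) ^ 4 := by ring
    nlinarith [mul_le_mul_of_nonneg_left htot hq0, hCS, hcK,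
      sq_nonneg ((A + A).card : ℝ), hceil1]
  rw [ge_iff_le, div_le_iff₀ (by nlinarith : (0:ℝ) < 4 * (c : ℝ))]
  exact hfin
end
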